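/- arXiv:1811.02387 — 2 statements merged into one kernel-verified Lean document; each statement's English description precedes it below -/
import Mathlib

section
/- For n ∈ ℕ, n ≥ 1, consider the flower graph F_n consisting of n circles (petals), each of length 1, all attached at a single vertex v, together with one half-line attached at v. Then C_{K_n} → 1 as n → ∞. (Here the compact core K_n, of total length n and uniformly bounded diameter, becomes more and more intricate as n grows.) -/
open MeasureTheory Real Set Filter

noncomputable section

/-- `f ∈ H¹(0,L)` with weak derivative `f'`. -/
def IsH1Interval (L : ℝ) (f f' : ℝ → ℝ) : Prop :=
  (∀ x ∈ Icc (0:ℝ) L, f x = f 0 + ∫ t in (0:ℝ)..x, f' t) ∧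
  IntervalIntegrable f' volume 0 L ∧
  IntervalIntegrable (fun x => f' x ^ 2) volume 0 L

/-- `h ∈ H¹(0,∞)` with weak derivative `h'`. -/
def IsH1Half (h h' : ℝ → ℝ) : Prop :=
  (∀ x : ℝ, 0 ≤ x → h x = h 0 + ∫ t in (0:ℝ)..x, h' t) ∧
  MemLp h 2 (volume.restrict (Ioi 0)) ∧ MemLp h' 2 (volume.restrict (Ioi 0))

/-- `u = (f₁,…,f_n,h) ∈ H¹(F_n)` on the flower graph `F_n`: `n` petals of
length `1` and one half-line, all attached at a single vertex, with the
continuity conditions `f_i(0) = f_i(1) = h(0)` for every `i`. -/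
def FlowerH1 (n : ℕ) (f f' : Fin n → ℝ → ℝ) (h h' : ℝ → ℝ) : Prop :=
  (∀ i : Fin n, IsH1Interval 1 (f i) (f' i)) ∧ IsH1Half h h' ∧
  (∀ i : Fin n, f i 0 = f i 1 ∧ f i 1 = h 0)

/-- `‖u‖₂²` on `F_n`. -/
def flowerMass (n : ℕ) (f : Fin n → ℝ → ℝ) (h : ℝ → ℝ) : ℝ :=
  (∑ i : Fin n, ∫ x in (0:ℝ)..1, f i x ^ 2) + ∫ x in Ioi (0:ℝ), h x ^ 2

/-- `‖u'‖₂²` on `F_n`. -/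
def flowerKin (n : ℕ) (f' : Fin n → ℝ → ℝ) (h' : ℝ → ℝ) : ℝ :=
  (∑ i : Fin n, ∫ x in (0:ℝ)..1, f' i x ^ 2) + ∫ x in Ioi (0:ℝ), h' x ^ 2

/-- `‖u‖_{6,K_n}⁶` on the compact core (the union of the petals). -/
def flowerSix (n : ℕ) (f : Fin n → ℝ → ℝ) : ℝ :=
  ∑ i : Fin n, ∫ x in (0:ℝ)..1, f i x ^ 6

/-- `u ≢ 0` on `F_n`. -/
def flowerNonzero (n : ℕ) (f : Fin n → ℝ → ℝ) (h : ℝ → ℝ) : Prop :=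
  (∃ i : Fin n, ∃ x ∈ Icc (0:ℝ) 1, f i x ≠ 0) ∨ (∃ x : ℝ, 0 ≤ x ∧ h x ≠ 0)

/-- The sharp reduced Gagliardo–Nirenberg constant `C_{K_n}` on `F_n`. -/
def flowerCK (n : ℕ) : ℝ :=
  sSup {q : ℝ | ∃ (f f' : Fin n → ℝ → ℝ) (h h' : ℝ → ℝ),
    FlowerH1 n f f' h h' ∧ flowerNonzero n f h ∧
    q = flowerSix n f / (flowerMass n f h ^ 2 * flowerKin n f' h')}

section AuxFlower1

lemma sq_setIntegral_eq {φ : ℝ → ℝ} {x : ℝ}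
    (hφ : IntegrableOn φ (Ioc 0 x)) :
    (∫ t in Ioc (0:ℝ) x, φ t) ^ 2
      = 2 * ∫ t in Ioc (0:ℝ) x, (∫ s in Ioc (0:ℝ) t, φ s) * φ t := by
  set μ : Measure ℝ := volume.restrict (Ioc 0 x) with hμ
  have hint : Integrable φ μ := hφ
  have hprod : Integrable (fun z : ℝ × ℝ => φ z.1 * φ z.2) (μ.prod μ) :=
    hint.mul_prod hint
  have hS : MeasurableSet {z : ℝ × ℝ | z.1 ≤ z.2} :=
    measurableSet_le measurable_fst measurable_snd
  have hT : MeasurableSet {z : ℝ × ℝ | z.1 < z.2} :=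
    measurableSet_lt measurable_fst measurable_snd
  have htot : ∫ z, φ z.1 * φ z.2 ∂(μ.prod μ) = (∫ t, φ t ∂μ) ^ 2 := by
    rw [integral_prod_mul]; ring
  have hswapset : ∫ z in {z : ℝ × ℝ | z.1 ≤ z.2}ᶜ, φ z.1 * φ z.2 ∂(μ.prod μ)
      = ∫ z in {z : ℝ × ℝ | z.1 < z.2}, φ z.1 * φ z.2 ∂(μ.prod μ) := by
    rw [← integral_indicator hS.compl, ← integral_indicator hT,
      ← MeasureTheory.integral_prod_swap]
    congr 1
    ext z
    simp only [Set.indicator_apply, Set.mem_compl_iff, Set.mem_setOf_eq,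
      Prod.fst_swap, Prod.snd_swap, not_le]
    split_ifs
    · ring
    · rfl
  have hdiag : ∫ z in {z : ℝ × ℝ | z.1 < z.2}, φ z.1 * φ z.2 ∂(μ.prod μ)
      = ∫ z in {z : ℝ × ℝ | z.1 ≤ z.2}, φ z.1 * φ z.2 ∂(μ.prod μ) := by
    apply setIntegral_congr_set
    have hd : (μ.prod μ) {z : ℝ × ℝ | z.1 = z.2} = 0 := by
      have hdm : MeasurableSet {z : ℝ × ℝ | z.1 = z.2} :=
        measurableSet_eq_fun measurable_fst measurable_snd
      rw [Measure.prod_apply hdm]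
      have hfib : ∀ a : ℝ, μ (Prod.mk a ⁻¹' {z : ℝ × ℝ | z.1 = z.2}) = 0 := by
        intro a
        have he : (Prod.mk a ⁻¹' {z : ℝ × ℝ | z.1 = z.2}) = {a} := by
          ext b; simp [eq_comm]
        rw [he]
        exact le_antisymm ((Measure.restrict_apply_le _ _).trans_eq Real.volume_singleton)
          zero_le
      simp [hfib]
    refine MeasureTheory.ae_eq_set.2 ⟨?_, ?_⟩
    · refine measure_mono_null ?_ hd
      intro z hz
      have h2 : ¬ z.1 ≤ z.2 := hz.2
      exact absurd hz.1.le h2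
    · refine measure_mono_null ?_ hd
      intro z hz
      exact le_antisymm hz.1 (not_lt.mp hz.2)
  have hfub : ∫ z in {z : ℝ × ℝ | z.1 ≤ z.2}ᶜ, φ z.1 * φ z.2 ∂(μ.prod μ)
      = ∫ t, (∫ s in Ioc (0:ℝ) t, φ s) * φ t ∂μ := by
    rw [← integral_indicator hS.compl]
    rw [MeasureTheory.integral_prod _ (hprod.indicator hS.compl)]
    refine integral_congr_ae ?_
    filter_upwards [ae_restrict_mem measurableSet_Ioc] with t ht
    have hfun : (fun s => ({z : ℝ × ℝ | z.1 ≤ z.2}ᶜ).indicator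
        (fun z : ℝ × ℝ => φ z.1 * φ z.2) (t, s))
        = (Iio t).indicator (fun s => φ t * φ s) := by
      ext s
      simp only [Set.indicator_apply, Set.mem_compl_iff, Set.mem_setOf_eq, not_le, Set.mem_Iio]
    rw [hfun, integral_indicator measurableSet_Iio]
    rw [Measure.restrict_restrict measurableSet_Iio]
    have hset : Iio t ∩ Ioc 0 x = Ioo 0 t := by
      ext s
      constructor
      · rintro ⟨h1, h2, h3⟩; exact ⟨h2, h1⟩
      · rintro ⟨h1, h2⟩; exact ⟨h2, h1, h2.le.trans ht.2⟩
    rw [hset, MeasureTheory.integral_const_mul, ← integral_Ioc_eq_integral_Ioo]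
    ring
  have hsplit := integral_add_compl hS hprod
  linarith [htot, hsplit, hswapset, hdiag, hfub]

lemma le_sqrt_mul_sqrt_of_forall {y A B : ℝ} (hA : 0 ≤ A) (hB : 0 ≤ B)
    (h : ∀ t : ℝ, 0 < t → y ≤ (t * A + B / t) / 2) :
    y ≤ Real.sqrt A * Real.sqrt B := by
  have key : ∀ ε : ℝ, 0 < ε → y ≤ Real.sqrt A * Real.sqrt B + ε := by
    intro ε hε
    rcases eq_or_lt_of_le hA with hA0 | hA0
    · -- A = 0
      have ht := h ((B + 1) / (2 * ε)) (by positivity)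
      rw [← hA0] at ht
      have hle : B / ((B + 1) / (2 * ε)) ≤ 2 * ε := by
        rw [div_le_iff₀ (by positivity)]
        have hc : 2 * ε * ((B + 1) / (2 * ε)) = B + 1 := by field_simp
        rw [hc]
        linarith
      calc y ≤ ((B + 1) / (2 * ε) * 0 + B / ((B + 1) / (2 * ε))) / 2 := ht
        _ ≤ (0 + 2 * ε) / 2 := by
            apply div_le_div_of_nonneg_right ?_ (by norm_num) |>.trans_eq rfl
            · exact add_le_add (le_of_eq (mul_zero _)) hle
        _ = ε := by ring
        _ ≤ Real.sqrt A * Real.sqrt B + ε := by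
            have : 0 ≤ Real.sqrt A * Real.sqrt B := by positivity
            linarith
    · rcases eq_or_lt_of_le hB with hB0 | hB0
      · -- B = 0
        have ht := h (2 * ε / A) (by positivity)
        rw [← hB0] at ht
        calc y ≤ (2 * ε / A * A + 0 / (2 * ε / A)) / 2 := ht
          _ = ε := by field_simp; ring
          _ ≤ Real.sqrt A * Real.sqrt B + ε := by
            have : 0 ≤ Real.sqrt A * Real.sqrt B := by positivity
            linarith
      · -- A, B > 0
        have hsB : 0 < Real.sqrt B := Real.sqrt_pos.2 hB0
        have hsA : 0 < Real.sqrt A := Real.sqrt_pos.2 hA0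
        have ht := h (Real.sqrt B / Real.sqrt A) (by positivity)
        have hval : (Real.sqrt B / Real.sqrt A * A + B / (Real.sqrt B / Real.sqrt A)) / 2
            = Real.sqrt A * Real.sqrt B := by
          have hA' : Real.sqrt A * Real.sqrt A = A := Real.mul_self_sqrt hA
          have hB' : Real.sqrt B * Real.sqrt B = B := Real.mul_self_sqrt hB
          field_simp
          nlinarith [hA', hB']
        rw [hval] at ht
        linarith
  by_contra hcon
  push_neg at hcon
  have := key ((y - Real.sqrt A * Real.sqrt B) / 2) (by linarith)
  linarith

lemma integral_abs_mul_le {f g : ℝ → ℝ} {μ : Measure ℝ}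
    (hf : Integrable (fun x => f x ^ 2) μ) (hg : Integrable (fun x => g x ^ 2) μ)
    (hfm : AEStronglyMeasurable f μ) (hgm : AEStronglyMeasurable g μ) :
    ∫ x, |f x * g x| ∂μ ≤ Real.sqrt (∫ x, f x ^ 2 ∂μ) * Real.sqrt (∫ x, g x ^ 2 ∂μ) := by
  have hint : Integrable (fun x => |f x * g x|) μ := by
    refine Integrable.mono' ((hf.add hg).div_const 2) ((hfm.mul hgm).norm.congr ?_) ?_
    · filter_upwards with x
      simp [Real.norm_eq_abs, abs_mul]
    · filter_upwards with x
      rw [Real.norm_eq_abs, abs_abs, abs_mul]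
      have hb : ((fun x => f x ^ 2) + fun x => g x ^ 2) x / 2 = (f x ^ 2 + g x ^ 2) / 2 := rfl
      rw [hb]
      nlinarith [sq_nonneg (|f x| - |g x|), abs_nonneg (f x), abs_nonneg (g x),
        sq_abs (f x), sq_abs (g x)]
  apply le_sqrt_mul_sqrt_of_forall (integral_nonneg fun x => sq_nonneg (f x))
    (integral_nonneg fun x => sq_nonneg (g x))
  intro t ht
  have hpt : ∀ x, |f x * g x| ≤ (t * f x ^ 2 + g x ^ 2 / t) / 2 := by
    intro x
    rw [abs_mul]
    have h1 : 2 * t * (|f x| * |g x|) ≤ t ^ 2 * f x ^ 2 + g x ^ 2 := by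
      nlinarith [sq_nonneg (t * |f x| - |g x|), sq_abs (f x), sq_abs (g x)]
    have h2 : (t * f x ^ 2 + g x ^ 2 / t) / 2 = (t ^ 2 * f x ^ 2 + g x ^ 2) / (2 * t) := by
      field_simp
    rw [h2, le_div_iff₀ (by positivity)]
    linarith
  calc ∫ x, |f x * g x| ∂μ ≤ ∫ x, (t * f x ^ 2 + g x ^ 2 / t) / 2 ∂μ := by
        refine integral_mono hint ?_ hpt
        exact (((hf.const_mul t).add (hg.div_const t)).div_const 2)
    _ = (t * ∫ x, f x ^ 2 ∂μ + (∫ x, g x ^ 2 ∂μ) / t) / 2 := by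
        rw [integral_div, integral_add (hf.const_mul t) (hg.div_const t),
          integral_const_mul, integral_div]
    _ ≤ (t * ∫ x, f x ^ 2 ∂μ + (∫ x, g x ^ 2 ∂μ) / t) / 2 := le_rfl

end AuxFlower1

section AuxFlower2
open intervalIntegral

lemma sq_rep {f φ : ℝ → ℝ} {b : ℝ} (hb : 0 ≤ b)
    (hrep : ∀ x ∈ Icc (0:ℝ) b, f x = f 0 + ∫ t in (0:ℝ)..x, φ t)
    (hφ : IntervalIntegrable φ volume 0 b) :
    ∀ x ∈ Icc (0:ℝ) b, f x ^ 2 = f 0 ^ 2 + ∫ t in (0:ℝ)..x, 2 * f t * φ t := by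
  intro x hx
  obtain ⟨hx0, hxb⟩ := hx
  have hsub : IntervalIntegrable φ volume 0 x := by
    apply hφ.mono_set
    rw [uIcc_of_le hx0, uIcc_of_le hb]
    exact Icc_subset_Icc le_rfl hxb
  have hφx : IntegrableOn φ (Ioc 0 x) :=
    (intervalIntegrable_iff_integrableOn_Ioc_of_le hx0).1 hsub
  have hFsq := sq_setIntegral_eq hφx
  -- continuity of the primitive on [0, x]
  have hicc : IntegrableOn φ (Icc 0 x) := by
    rwa [integrableOn_Icc_iff_integrableOn_Ioc]
  have hFc : ContinuousOn (fun t => ∫ s in Ioc (0:ℝ) t, φ s) (Icc 0 x) :=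
    continuousOn_primitive hicc
  -- integrability of F * φ on Ioc 0 x
  have hFφ : IntegrableOn (fun t => (∫ s in Ioc (0:ℝ) t, φ s) * φ t) (Ioc 0 x) := by
    have h1 : IntervalIntegrable (fun t => (∫ s in Ioc (0:ℝ) t, φ s) * φ t) volume 0 x := by
      apply hsub.continuousOn_mul
      rwa [uIcc_of_le hx0]
    exact (intervalIntegrable_iff_integrableOn_Ioc_of_le hx0).1 h1
  -- rewrite target integral
  have hchange : ∫ t in (0:ℝ)..x, 2 * f t * φ t
      = 2 * f 0 * (∫ t in Ioc (0:ℝ) x, φ t)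
        + 2 * ∫ t in Ioc (0:ℝ) x, (∫ s in Ioc (0:ℝ) t, φ s) * φ t := by
    rw [integral_of_le hx0]
    have hcongr : ∀ t ∈ Ioc (0:ℝ) x,
        2 * f t * φ t = 2 * f 0 * φ t + 2 * ((∫ s in Ioc (0:ℝ) t, φ s) * φ t) := by
      intro t ht
      have htIcc : t ∈ Icc (0:ℝ) b := ⟨ht.1.le, ht.2.trans hxb⟩
      have := hrep t htIcc
      rw [this, integral_of_le ht.1.le]
      ring
    rw [setIntegral_congr_fun measurableSet_Ioc hcongr]
    rw [integral_add ((hφx.const_mul _)) (hFφ.const_mul 2)]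
    rw [MeasureTheory.integral_const_mul, MeasureTheory.integral_const_mul]
  have hfx := hrep x ⟨hx0, hxb⟩
  rw [integral_of_le hx0] at hfx
  rw [hchange, hfx]
  nlinarith [hFsq]

lemma petal_facts {f φ : ℝ → ℝ}
    (hrep : ∀ x ∈ Icc (0:ℝ) 1, f x = f 0 + ∫ t in (0:ℝ)..x, φ t)
    (hφ : IntervalIntegrable φ volume 0 1)
    (hφ2 : IntervalIntegrable (fun x => φ x ^ 2) volume 0 1)
    (hbc : f 0 = f 1) :
    (∫ x in (0:ℝ)..1, f x ^ 6
        ≤ (f 0 ^ 2 + ∫ x in (0:ℝ)..1, |f x * φ x|) ^ 2 * ∫ x in (0:ℝ)..1, f x ^ 2)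
    ∧ (∫ x in (0:ℝ)..1, f x ^ 2) ≤ f 0 ^ 2 + ∫ x in (0:ℝ)..1, |f x * φ x|
    ∧ f 0 ^ 2 ≤ (∫ x in (0:ℝ)..1, f x ^ 2) + ∫ x in (0:ℝ)..1, |f x * φ x|
    ∧ (∫ x in (0:ℝ)..1, |f x * φ x|) ^ 2
        ≤ (∫ x in (0:ℝ)..1, f x ^ 2) * ∫ x in (0:ℝ)..1, φ x ^ 2
    ∧ 0 ≤ ∫ x in (0:ℝ)..1, |f x * φ x| := by
  have h01 : (0:ℝ) ≤ 1 := zero_le_one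
  have huIcc : uIcc (0:ℝ) 1 = Icc (0:ℝ) 1 := uIcc_of_le h01
  -- continuity of f on [0,1]
  have hFc : ContinuousOn (fun y => ∫ t in (0:ℝ)..y, φ t) (Icc (0:ℝ) 1) := by
    have := continuousOn_primitive_interval' hφ (by rw [huIcc]; exact ⟨le_rfl, h01⟩)
    rwa [huIcc] at this
  have hfc : ContinuousOn f (Icc (0:ℝ) 1) :=
    (continuousOn_const.add hFc).congr hrep
  have hsq := sq_rep h01 hrep hφ
  -- integrability facts
  have hintf2 : IntervalIntegrable (fun x => f x ^ 2) volume 0 1 := by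
    apply ContinuousOn.intervalIntegrable
    rw [huIcc]; exact hfc.pow 2
  have hintf6 : IntervalIntegrable (fun x => f x ^ 6) volume 0 1 := by
    apply ContinuousOn.intervalIntegrable
    rw [huIcc]; exact hfc.pow 6
  have hint2fφ : IntervalIntegrable (fun t => 2 * f t * φ t) volume 0 1 := by
    apply hφ.continuousOn_mul (g := fun t => 2 * f t)
    rw [huIcc]; exact continuousOn_const.mul hfc
  have hintfφ : IntervalIntegrable (fun t => f t * φ t) volume 0 1 := by
    apply hφ.continuousOn_mul (g := f)
    rw [huIcc]; exact hfc
  have hintabs : IntervalIntegrable (fun t => |f t * φ t|) volume 0 1 := hintfφ.abs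
  have hint2abs : IntervalIntegrable (fun t => |2 * f t * φ t|) volume 0 1 := hint2fφ.abs
  set Q := ∫ x in (0:ℝ)..1, |f x * φ x| with hQ
  have hQnn : 0 ≤ Q := integral_nonneg h01 (fun x _ => abs_nonneg _)
  have habs2 : (∫ x in (0:ℝ)..1, |2 * f x * φ x|) = 2 * Q := by
    rw [hQ, ← intervalIntegral.integral_const_mul]
    apply integral_congr
    intro t _
    show |2 * f t * φ t| = 2 * |f t * φ t|
    rw [abs_mul, abs_mul, abs_two, abs_mul]
    ring
  have hone : (∫ t in (0:ℝ)..1, 2 * f t * φ t) = 0 := by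
    have := hsq 1 ⟨h01, le_rfl⟩
    rw [← hbc] at this
    linarith
  -- oscillation bound
  have hosc : ∀ x ∈ Icc (0:ℝ) 1, |f x ^ 2 - f 0 ^ 2| ≤ Q := by
    intro x hx
    have hmx1 : IntervalIntegrable (fun t => 2 * f t * φ t) volume 0 x := by
      apply hint2fφ.mono_set
      rw [huIcc, uIcc_of_le hx.1]
      exact Icc_subset_Icc le_rfl hx.2
    have hmx2 : IntervalIntegrable (fun t => 2 * f t * φ t) volume x 1 := by
      apply hint2fφ.mono_set
      rw [huIcc, uIcc_of_le hx.2]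
      exact Icc_subset_Icc hx.1 le_rfl
    have hadj := integral_add_adjacent_intervals hmx1 hmx2
    have hadjabs := integral_add_adjacent_intervals hmx1.abs hmx2.abs
    have hd := hsq x hx
    have h1 : |∫ t in (0:ℝ)..x, 2 * f t * φ t| ≤ ∫ t in (0:ℝ)..x, |2 * f t * φ t| :=
      intervalIntegral.abs_integral_le_integral_abs hx.1
    have h2 : |∫ t in (0:ℝ)..x, 2 * f t * φ t| ≤ ∫ t in x..1, |2 * f t * φ t| := by
      have hneg : (∫ t in (0:ℝ)..x, 2 * f t * φ t) = -(∫ t in x..1, 2 * f t * φ t) := by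
        rw [← hadj] at hone; linarith
      rw [hneg, abs_neg]
      exact intervalIntegral.abs_integral_le_integral_abs hx.2
    have hsum : (∫ t in (0:ℝ)..x, |2 * f t * φ t|) + ∫ t in x..1, |2 * f t * φ t| = 2 * Q := by
      rw [hadjabs, habs2]
    have hD : f x ^ 2 - f 0 ^ 2 = ∫ t in (0:ℝ)..x, 2 * f t * φ t := by linarith [hd]
    have : 2 * |f x ^ 2 - f 0 ^ 2| ≤ 2 * Q := by
      rw [hD]
      linarith
    linarith
  have hup : ∀ x ∈ Icc (0:ℝ) 1, f x ^ 2 ≤ f 0 ^ 2 + Q := by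
    intro x hx
    have := abs_le.1 (hosc x hx)
    linarith [this.2]
  have hdown : ∀ x ∈ Icc (0:ℝ) 1, f 0 ^ 2 - Q ≤ f x ^ 2 := by
    intro x hx
    have := abs_le.1 (hosc x hx)
    linarith [this.1]
  have hA2nn : 0 ≤ ∫ x in (0:ℝ)..1, f x ^ 2 :=
    integral_nonneg h01 (fun x _ => sq_nonneg _)
  refine ⟨?_, ?_, ?_, ?_, hQnn⟩
  · -- six bound
    have hmono : ∀ x ∈ Icc (0:ℝ) 1, f x ^ 6 ≤ (f 0 ^ 2 + Q) ^ 2 * f x ^ 2 := by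
      intro x hx
      have h1 := hup x hx
      have h2 : (0:ℝ) ≤ f x ^ 2 := sq_nonneg _
      nlinarith [mul_le_mul_of_nonneg_right (mul_le_mul h1 h1 h2 (h2.trans h1)) h2]
    calc ∫ x in (0:ℝ)..1, f x ^ 6
        ≤ ∫ x in (0:ℝ)..1, (f 0 ^ 2 + Q) ^ 2 * f x ^ 2 :=
          integral_mono_on h01 hintf6 (hintf2.const_mul _) hmono
      _ = (f 0 ^ 2 + Q) ^ 2 * ∫ x in (0:ℝ)..1, f x ^ 2 := integral_const_mul _ _
  · -- A2 ≤ W + Q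
    calc (∫ x in (0:ℝ)..1, f x ^ 2)
        ≤ ∫ x in (0:ℝ)..1, (f 0 ^ 2 + Q) :=
          integral_mono_on h01 hintf2 (intervalIntegrable_const) hup
      _ = f 0 ^ 2 + Q := by simp
  · -- W ≤ A2 + Q
    have : (f 0 ^ 2 - Q) = ∫ _x in (0:ℝ)..1, (f 0 ^ 2 - Q) := by simp
    have hle : (∫ _x in (0:ℝ)..1, (f 0 ^ 2 - Q)) ≤ ∫ x in (0:ℝ)..1, f x ^ 2 :=
      integral_mono_on h01 intervalIntegrable_const hintf2 hdown
    linarith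
  · -- Cauchy-Schwarz
    have hQle : Q ≤ Real.sqrt (∫ x in (0:ℝ)..1, f x ^ 2)
        * Real.sqrt (∫ x in (0:ℝ)..1, φ x ^ 2) := by
      rw [hQ, integral_of_le h01, integral_of_le h01, integral_of_le h01]
      apply integral_abs_mul_le
      · exact (intervalIntegrable_iff_integrableOn_Ioc_of_le h01).1 hintf2
      · exact (intervalIntegrable_iff_integrableOn_Ioc_of_le h01).1 hφ2
      · exact ((hfc.mono Ioc_subset_Icc_self).aestronglyMeasurable measurableSet_Ioc)
      · exact ((intervalIntegrable_iff_integrableOn_Ioc_of_le h01).1 hφ).aestronglyMeasurable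
    have hK2nn : 0 ≤ ∫ x in (0:ℝ)..1, φ x ^ 2 :=
      integral_nonneg h01 (fun x _ => sq_nonneg _)
    calc Q ^ 2 ≤ (Real.sqrt (∫ x in (0:ℝ)..1, f x ^ 2)
          * Real.sqrt (∫ x in (0:ℝ)..1, φ x ^ 2)) ^ 2 := by
          apply pow_le_pow_left₀ hQnn hQle
      _ = (∫ x in (0:ℝ)..1, f x ^ 2) * ∫ x in (0:ℝ)..1, φ x ^ 2 := by
          rw [mul_pow, Real.sq_sqrt hA2nn, Real.sq_sqrt hK2nn]

lemma halfline_fact {h h' : ℝ → ℝ}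
    (hrep : ∀ x : ℝ, 0 ≤ x → h x = h 0 + ∫ t in (0:ℝ)..x, h' t)
    (hh : MemLp h 2 (volume.restrict (Ioi 0)))
    (hh' : MemLp h' 2 (volume.restrict (Ioi 0))) :
    (h 0) ^ 2 ≤ 2 * (Real.sqrt (∫ x in Ioi (0:ℝ), h x ^ 2)
      * Real.sqrt (∫ x in Ioi (0:ℝ), h' x ^ 2)) := by
  have hinth2 : IntegrableOn (fun x => h x ^ 2) (Ioi 0) := hh.integrable_sq
  have hinth'2 : IntegrableOn (fun x => h' x ^ 2) (Ioi 0) := hh'.integrable_sq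
  have hCS := integral_abs_mul_le hh.integrable_sq hh'.integrable_sq hh.1 hh'.1
  set J := ∫ x in Ioi (0:ℝ), |h x * h' x| with hJ
  have hJnn : 0 ≤ J := integral_nonneg fun x => abs_nonneg _
  have habsint : Integrable (fun x => |h x * h' x|) (volume.restrict (Ioi 0)) := by
    refine Integrable.mono' ((hinth2.add hinth'2).div_const 2) ((hh.1.mul hh'.1).norm.congr ?_) ?_
    · filter_upwards with x
      simp [Real.norm_eq_abs, abs_mul]
    · filter_upwards with x
      rw [Real.norm_eq_abs, abs_abs, abs_mul]
      have hb : ((fun x => h x ^ 2) + fun x => h' x ^ 2) x / 2 = (h x ^ 2 + h' x ^ 2) / 2 := rfl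
      rw [hb]
      nlinarith [sq_nonneg (|h x| - |h' x|), abs_nonneg (h x), abs_nonneg (h' x),
        sq_abs (h x), sq_abs (h' x)]
  -- for every x ≥ 0, h 0 ^ 2 ≤ h x ^ 2 + 2 * J
  have hkey : ∀ x : ℝ, 0 ≤ x → h 0 ^ 2 ≤ h x ^ 2 + 2 * J := by
    intro x hx
    -- h' is interval integrable on [0, x]
    have hmem : MemLp h' 2 (volume.restrict (Ioc 0 x)) := by
      have h1 := hh'.restrict (Ioc 0 x)
      rwa [Measure.restrict_restrict measurableSet_Ioc,
        Set.inter_eq_left.2 Ioc_subset_Ioi_self] at h1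
    haveI : IsFiniteMeasure (volume.restrict (Ioc (0:ℝ) x)) :=
      ⟨by rw [Measure.restrict_apply_univ]; exact measure_Ioc_lt_top⟩
    have hii : IntervalIntegrable h' volume 0 x := by
      rw [intervalIntegrable_iff_integrableOn_Ioc_of_le hx]
      exact hmem.integrable one_le_two
    have hid := sq_rep hx (fun y hy => hrep y hy.1) hii x ⟨hx, le_rfl⟩
    -- the interval integral of 2 h h' is bounded by 2 J
    have hhc : ContinuousOn h (Icc 0 x) := by
      have hFc : ContinuousOn (fun y => ∫ t in (0:ℝ)..y, h' t) (Icc (0:ℝ) x) := by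
        have := continuousOn_primitive_interval' hii left_mem_uIcc
        rwa [uIcc_of_le hx] at this
      exact (continuousOn_const.add hFc).congr (fun y hy => hrep y hy.1)
    have hint2hh' : IntervalIntegrable (fun t => 2 * h t * h' t) volume 0 x := by
      apply hii.continuousOn_mul (g := fun t => 2 * h t)
      rw [uIcc_of_le hx]
      exact continuousOn_const.mul hhc
    have h1 : |∫ t in (0:ℝ)..x, 2 * h t * h' t| ≤ ∫ t in (0:ℝ)..x, |2 * h t * h' t| :=
      intervalIntegral.abs_integral_le_integral_abs hx
    have h2 : (∫ t in (0:ℝ)..x, |2 * h t * h' t|) ≤ 2 * J := by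
      rw [integral_of_le hx]
      have hc : ∀ t ∈ Ioc (0:ℝ) x, |2 * h t * h' t| = 2 * |h t * h' t| := by
        intro t _
        rw [abs_mul, abs_mul, abs_two, abs_mul]
        ring
      rw [setIntegral_congr_fun measurableSet_Ioc hc]
      rw [MeasureTheory.integral_const_mul]
      have : (∫ t in Ioc (0:ℝ) x, |h t * h' t|) ≤ J := by
        rw [hJ]
        apply setIntegral_mono_set habsint
        · filter_upwards with t using abs_nonneg _
        · exact HasSubset.Subset.eventuallyLE Ioc_subset_Ioi_self
      linarith
    nlinarith [hid, h1, h2, neg_abs_le (∫ t in (0:ℝ)..x, 2 * h t * h' t)]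
  -- there are points where h is arbitrarily small
  have hsmall : ∀ δ : ℝ, 0 < δ → ∃ x : ℝ, 0 < x ∧ h x ^ 2 < δ := by
    intro δ hδ
    by_contra hcon
    push_neg at hcon
    set c2 := ∫ x in Ioi (0:ℝ), h x ^ 2 with hc2
    have hc2nn : 0 ≤ c2 := integral_nonneg fun x => sq_nonneg _
    set T := (c2 + 1) / δ with hT
    have hTpos : 0 < T := by positivity
    have hconst : ∫ _x in Ioc (0:ℝ) T, δ = T * δ := by
      rw [setIntegral_const, measureReal_def, Real.volume_Ioc, sub_zero, ENNReal.toReal_ofReal hTpos.le,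
        smul_eq_mul]
    have hlow : T * δ ≤ ∫ x in Ioc (0:ℝ) T, h x ^ 2 := by
      rw [← hconst]
      refine setIntegral_mono_on (integrableOn_const measure_Ioc_lt_top.ne)
        (hinth2.mono_set Ioc_subset_Ioi_self) measurableSet_Ioc ?_
      intro y hy
      exact hcon y hy.1
    have hupper : (∫ x in Ioc (0:ℝ) T, h x ^ 2) ≤ c2 := by
      rw [hc2]
      apply setIntegral_mono_set hinth2
      · filter_upwards with t using sq_nonneg _
      · exact HasSubset.Subset.eventuallyLE Ioc_subset_Ioi_self
    have hTδ : T * δ = c2 + 1 := by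
      rw [hT]; field_simp
    linarith
  -- conclude
  have hW2J : h 0 ^ 2 ≤ 2 * J := by
    refine le_of_forall_pos_le_add ?_
    intro ε hε
    obtain ⟨x, hx, hxh⟩ := hsmall ε hε
    have := hkey x hx.le
    linarith
  linarith [hCS, hJnn]

lemma scalar_ineq {n : ℕ} (hn : 1 ≤ n) {θ k2 W c2 bh2 P : ℝ}
    (hθ : 0 ≤ θ) (hk2 : 0 ≤ k2) (hW : 0 ≤ W) (hc2 : 0 ≤ c2) (hbh2 : 0 ≤ bh2) (hP : 0 ≤ P)
    (hP2 : P ^ 2 ≤ θ * k2) (hnW : (n:ℝ) * W ≤ θ + P) (hWsq : W ^ 2 ≤ 4 * c2 * bh2) :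
    θ * W ^ 2 + 2 * W * (min θ (W + P)) * P + θ ^ 2 * k2
      ≤ (1 + 6 / (n:ℝ)) * ((θ + c2) ^ 2 * (k2 + bh2)) := by
  have hnpos : (0:ℝ) < n := by exact_mod_cast hn
  have key : (n:ℝ) * (2 * W * (min θ (W + P)) * P) ≤ 6 * (θ ^ 2 * k2 + θ * W ^ 2) := by
    rcases le_or_gt θ k2 with hcase | hcase
    · -- θ ≤ k2
      set s := Real.sqrt (θ * k2) with hsdef
      have hsnn : 0 ≤ s := Real.sqrt_nonneg _
      have hs : s ^ 2 = θ * k2 := Real.sq_sqrt (by positivity)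
      have hsP : P ≤ s := by nlinarith
      have hsθ : θ ≤ s := by nlinarith
      have e1 : (n:ℝ) * W ≤ 2 * s := by linarith
      have e2 : θ * P ≤ θ * s := mul_le_mul_of_nonneg_left hsP hθ
      have e3 : (n:ℝ) * W * (θ * P) ≤ 2 * s * (θ * s) :=
        mul_le_mul e1 e2 (by positivity) (by positivity)
      have hm : min θ (W + P) ≤ θ := min_le_left _ _
      have e4 : (n:ℝ) * (2 * W * (min θ (W + P)) * P) ≤ (n:ℝ) * (2 * W * θ * P) := by
        have : 2 * W * (min θ (W + P)) * P ≤ 2 * W * θ * P := by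
          apply mul_le_mul_of_nonneg_right _ hP
          apply mul_le_mul_of_nonneg_left hm (by positivity)
        exact mul_le_mul_of_nonneg_left this hnpos.le
      nlinarith
    · -- k2 < θ
      have hPθ : P ≤ θ := by nlinarith
      have e1 : (n:ℝ) * W ≤ 2 * θ := by linarith
      have hm : min θ (W + P) ≤ W + P := min_le_right _ _
      have e4 : (n:ℝ) * (2 * W * (min θ (W + P)) * P) ≤ (n:ℝ) * (2 * W * (W + P) * P) := by
        have : 2 * W * (min θ (W + P)) * P ≤ 2 * W * (W + P) * P := by
          apply mul_le_mul_of_nonneg_right _ hP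
          apply mul_le_mul_of_nonneg_left hm (by positivity)
        exact mul_le_mul_of_nonneg_left this hnpos.le
      -- n * (2 W (W+P) P) = 2 (nW) W P + 2 (nW) P^2 ≤ 4 θ W P + 4 θ P^2
      have e5 : (n:ℝ) * W * (W * P) ≤ 2 * θ * (W * P) :=
        mul_le_mul_of_nonneg_right e1 (mul_nonneg hW hP)
      have e6 : (n:ℝ) * W * P ^ 2 ≤ 2 * θ * P ^ 2 :=
        mul_le_mul_of_nonneg_right e1 (sq_nonneg P)
      have e7 : 2 * θ * (W * P) ≤ θ * (W ^ 2 + P ^ 2) := by nlinarith [sq_nonneg (W - P), hθ]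
      have e8 : θ * P ^ 2 ≤ θ * (θ * k2) := mul_le_mul_of_nonneg_left hP2 hθ
      nlinarith
  have hbudget : θ ^ 2 * k2 + θ * W ^ 2 ≤ (θ + c2) ^ 2 * (k2 + bh2) := by
    have b1 : θ * W ^ 2 ≤ θ * (4 * c2 * bh2) := mul_le_mul_of_nonneg_left hWsq hθ
    nlinarith [mul_nonneg (sq_nonneg (θ - c2)) hbh2,
      mul_nonneg (mul_nonneg (mul_nonneg hθ hc2) (by norm_num : (0:ℝ) ≤ 2)) hk2,
      mul_nonneg (mul_nonneg hc2 hc2) hk2]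
  have hcross : 2 * W * (min θ (W + P)) * P ≤ 6 / (n:ℝ) * (θ ^ 2 * k2 + θ * W ^ 2) := by
    rw [div_mul_eq_mul_div, le_div_iff₀ hnpos]
    nlinarith [key]
  have hfac : (0:ℝ) ≤ 6 / (n:ℝ) := by positivity
  have hsum : 0 ≤ θ ^ 2 * k2 + θ * W ^ 2 := by positivity
  calc θ * W ^ 2 + 2 * W * (min θ (W + P)) * P + θ ^ 2 * k2
      ≤ (θ ^ 2 * k2 + θ * W ^ 2) + 6 / (n:ℝ) * (θ ^ 2 * k2 + θ * W ^ 2) := by linarith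
    _ = (1 + 6 / (n:ℝ)) * (θ ^ 2 * k2 + θ * W ^ 2) := by ring
    _ ≤ (1 + 6 / (n:ℝ)) * ((θ + c2) ^ 2 * (k2 + bh2)) := by
        apply mul_le_mul_of_nonneg_left hbudget (by positivity)

lemma exp_decay_integral {b : ℝ} (hb : 0 < b) :
    ∫ x in Ioi (0:ℝ), Real.exp (-(b * x)) = 1 / b := by
  have hderiv : ∀ x ∈ Ici (0:ℝ),
      HasDerivAt (fun y => -(1 / b) * Real.exp (-(b * y))) (Real.exp (-(b * x))) x := by
    intro x _
    have h1 : HasDerivAt (fun y : ℝ => -(b * y)) (-b) x := by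
      have := ((hasDerivAt_id x).const_mul b).neg; simp only [id, mul_one] at this; exact this
    have h2 := (h1.exp).const_mul (-(1 / b))
    refine h2.congr_deriv ?_
    field_simp
  have hint : IntegrableOn (fun x => Real.exp (-(b * x))) (Ioi (0:ℝ)) := by
    have := exp_neg_integrableOn_Ioi 0 hb
    simpa [neg_mul] using this
  have htend : Tendsto (fun y => -(1 / b) * Real.exp (-(b * y))) atTop (nhds 0) := by
    have h1 : Tendsto (fun y : ℝ => b * y) atTop atTop :=
      Filter.Tendsto.const_mul_atTop hb tendsto_id
    have h2 : Tendsto (fun y : ℝ => Real.exp (-(b * y))) atTop (nhds 0) :=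
      Real.tendsto_exp_neg_atTop_nhds_zero.comp h1
    have h3 := h2.const_mul (-(1 / b))
    simpa using h3
  have := integral_Ioi_of_hasDerivAt_of_tendsto' hderiv hint htend
  rw [this]
  simp [Real.exp_zero]

theorem flower_upper {n : ℕ} (hn : 1 ≤ n) {f f' : Fin n → ℝ → ℝ} {h h' : ℝ → ℝ}
    (H : FlowerH1 n f f' h h') :
    flowerSix n f ≤ (1 + 6 / (n:ℝ)) * (flowerMass n f h ^ 2 * flowerKin n f' h') := by
  obtain ⟨Hpet, Hhalf, Hbc⟩ := H
  set A2 : Fin n → ℝ := fun i => ∫ x in (0:ℝ)..1, f i x ^ 2 with hA2def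
  set K2 : Fin n → ℝ := fun i => ∫ x in (0:ℝ)..1, f' i x ^ 2 with hK2def
  set Q : Fin n → ℝ := fun i => ∫ x in (0:ℝ)..1, |f i x * f' i x| with hQdef
  set W : ℝ := h 0 ^ 2 with hWdef
  set c2 : ℝ := ∫ x in Ioi (0:ℝ), h x ^ 2 with hc2def
  set bh2 : ℝ := ∫ x in Ioi (0:ℝ), h' x ^ 2 with hbh2def
  set θ : ℝ := ∑ i : Fin n, A2 i with hθdef
  set k2 : ℝ := ∑ i : Fin n, K2 i with hk2def
  set P : ℝ := ∑ i : Fin n, Q i with hPdef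
  have hW0 : ∀ i, f i 0 ^ 2 = W := fun i => by rw [(Hbc i).1, (Hbc i).2]
  have pf := fun i => petal_facts (Hpet i).1 (Hpet i).2.1 (Hpet i).2.2 (Hbc i).1
  have h6 : ∀ i, ∫ x in (0:ℝ)..1, f i x ^ 6 ≤ (W + Q i) ^ 2 * A2 i := by
    intro i
    have := (pf i).1
    rwa [hW0 i] at this
  have hA2le : ∀ i, A2 i ≤ W + Q i := by
    intro i; have := (pf i).2.1; rwa [hW0 i] at this
  have hWle : ∀ i, W ≤ A2 i + Q i := by
    intro i; have := (pf i).2.2.1; rwa [hW0 i] at this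
  have hQ2 : ∀ i, Q i ^ 2 ≤ A2 i * K2 i := fun i => (pf i).2.2.2.1
  have hQnn : ∀ i, 0 ≤ Q i := fun i => (pf i).2.2.2.2
  have hA2nn : ∀ i, 0 ≤ A2 i :=
    fun i => intervalIntegral.integral_nonneg zero_le_one (fun x _ => sq_nonneg _)
  have hK2nn : ∀ i, 0 ≤ K2 i :=
    fun i => intervalIntegral.integral_nonneg zero_le_one (fun x _ => sq_nonneg _)
  have hθnn : 0 ≤ θ := Finset.sum_nonneg fun i _ => hA2nn i
  have hk2nn : 0 ≤ k2 := Finset.sum_nonneg fun i _ => hK2nn i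
  have hPnn : 0 ≤ P := Finset.sum_nonneg fun i _ => hQnn i
  have hWnn : 0 ≤ W := sq_nonneg _
  have hc2nn : 0 ≤ c2 := integral_nonneg fun x => sq_nonneg _
  have hbh2nn : 0 ≤ bh2 := integral_nonneg fun x => sq_nonneg _
  have hA2leθ : ∀ i, A2 i ≤ θ := by
    intro i
    exact Finset.single_le_sum (fun j _ => hA2nn j) (Finset.mem_univ i)
  have hQleP : ∀ i, Q i ≤ P := by
    intro i
    exact Finset.single_le_sum (fun j _ => hQnn j) (Finset.mem_univ i)
  -- half-line bound
  have hWsq : W ^ 2 ≤ 4 * c2 * bh2 := by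
    have h1 := halfline_fact Hhalf.1 Hhalf.2.1 Hhalf.2.2
    have h2 : W ≤ 2 * (Real.sqrt c2 * Real.sqrt bh2) := h1
    have h3 : W ^ 2 ≤ (2 * (Real.sqrt c2 * Real.sqrt bh2)) ^ 2 := by
      apply pow_le_pow_left₀ hWnn h2
    calc W ^ 2 ≤ (2 * (Real.sqrt c2 * Real.sqrt bh2)) ^ 2 := h3
      _ = 4 * c2 * bh2 := by
          rw [mul_pow, mul_pow, Real.sq_sqrt hc2nn, Real.sq_sqrt hbh2nn]
          ring
  -- Cauchy-Schwarz for sums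
  have hP2 : P ^ 2 ≤ θ * k2 := by
    have hterm : ∀ i, Q i ≤ Real.sqrt (A2 i) * Real.sqrt (K2 i) := by
      intro i
      have h1 := Real.sqrt_le_sqrt (hQ2 i)
      rwa [Real.sqrt_sq (hQnn i), Real.sqrt_mul (hA2nn i)] at h1
    have hsum : P ≤ ∑ i : Fin n, Real.sqrt (A2 i) * Real.sqrt (K2 i) :=
      Finset.sum_le_sum fun i _ => hterm i
    have hcs := Finset.sum_mul_sq_le_sq_mul_sq Finset.univ
      (fun i => Real.sqrt (A2 i)) (fun i => Real.sqrt (K2 i))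
    have hsq1 : ∀ i : Fin n, Real.sqrt (A2 i) ^ 2 = A2 i := fun i => Real.sq_sqrt (hA2nn i)
    have hsq2 : ∀ i : Fin n, Real.sqrt (K2 i) ^ 2 = K2 i := fun i => Real.sq_sqrt (hK2nn i)
    calc P ^ 2 ≤ (∑ i : Fin n, Real.sqrt (A2 i) * Real.sqrt (K2 i)) ^ 2 := by
          apply pow_le_pow_left₀ hPnn hsum
      _ ≤ (∑ i : Fin n, Real.sqrt (A2 i) ^ 2) * ∑ i : Fin n, Real.sqrt (K2 i) ^ 2 := hcs
      _ = θ * k2 := by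
          rw [Finset.sum_congr rfl fun i _ => hsq1 i, Finset.sum_congr rfl fun i _ => hsq2 i]
  have hnW : (n:ℝ) * W ≤ θ + P := by
    have h1 : ∑ _i : Fin n, W ≤ ∑ i : Fin n, (A2 i + Q i) :=
      Finset.sum_le_sum fun i _ => hWle i
    rw [Finset.sum_const, Finset.card_univ, Fintype.card_fin, nsmul_eq_mul] at h1
    rw [Finset.sum_add_distrib] at h1
    exact h1
  -- per-petal expansion bound
  have hterm : ∀ i : Fin n, (W + Q i) ^ 2 * A2 i
      ≤ W ^ 2 * A2 i + 2 * W * (min θ (W + P)) * Q i + θ ^ 2 * K2 i := by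
    intro i
    have hmin : A2 i ≤ min θ (W + P) :=
      le_min (hA2leθ i) ((hA2le i).trans (by linarith [hQleP i]))
    have e1 : 2 * W * Q i * A2 i ≤ 2 * W * Q i * min θ (W + P) :=
      mul_le_mul_of_nonneg_left hmin (mul_nonneg (mul_nonneg (by norm_num) hWnn) (hQnn i))
    have e2 : Q i ^ 2 * A2 i ≤ A2 i * K2 i * A2 i :=
      mul_le_mul_of_nonneg_right (hQ2 i) (hA2nn i)
    have e3 : A2 i * K2 i * A2 i ≤ θ ^ 2 * K2 i := by
      have := mul_le_mul (hA2leθ i) (hA2leθ i) (hA2nn i) hθnn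
      nlinarith [hK2nn i]
    nlinarith [e1, e2, e3]
  -- sum up
  have hsum6 : flowerSix n f ≤ ∑ i : Fin n, (W + Q i) ^ 2 * A2 i :=
    Finset.sum_le_sum fun i _ => h6 i
  have hsum7 : ∑ i : Fin n, (W + Q i) ^ 2 * A2 i
      ≤ θ * W ^ 2 + 2 * W * (min θ (W + P)) * P + θ ^ 2 * k2 := by
    calc ∑ i : Fin n, (W + Q i) ^ 2 * A2 i
        ≤ ∑ i : Fin n, (W ^ 2 * A2 i + 2 * W * (min θ (W + P)) * Q i + θ ^ 2 * K2 i) :=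
          Finset.sum_le_sum fun i _ => hterm i
      _ = θ * W ^ 2 + 2 * W * (min θ (W + P)) * P + θ ^ 2 * k2 := by
          rw [Finset.sum_add_distrib, Finset.sum_add_distrib, ← Finset.mul_sum,
            ← Finset.mul_sum, ← Finset.mul_sum]
          ring
  have hfinal := scalar_ineq hn hθnn hk2nn hWnn hc2nn hbh2nn hPnn hP2 hnW hWsq
  have hmass : flowerMass n f h = θ + c2 := rfl
  have hkin : flowerKin n f' h' = k2 + bh2 := rfl
  rw [hmass, hkin]
  calc flowerSix n f ≤ θ * W ^ 2 + 2 * W * (min θ (W + P)) * P + θ ^ 2 * k2 :=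
        hsum6.trans hsum7
    _ ≤ (1 + 6 / (n:ℝ)) * ((θ + c2) ^ 2 * (k2 + bh2)) := hfinal

theorem flower_one_mem (n : ℕ) (hn : 1 ≤ n) :
    ∃ (f f' : Fin n → ℝ → ℝ) (h h' : ℝ → ℝ),
      FlowerH1 n f f' h h' ∧ flowerNonzero n f h ∧
      (1:ℝ) = flowerSix n f / (flowerMass n f h ^ 2 * flowerKin n f' h') := by
  have hn0 : (0:ℝ) < n := by exact_mod_cast hn
  set a : ℝ := 1 / (2 * (n:ℝ)) with hadef
  have ha : 0 < a := by positivity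
  refine ⟨fun _ _ => 1, fun _ _ => 0, fun x => Real.exp (-(a * x)),
    fun x => -a * Real.exp (-(a * x)), ?_, ?_, ?_⟩
  · -- FlowerH1
    refine ⟨fun i => ⟨?_, ?_, ?_⟩, ⟨?_, ?_, ?_⟩, fun i => ⟨rfl, by simp⟩⟩
    · intro x _; simp
    · exact intervalIntegrable_const
    · simpa using (intervalIntegrable_const (c := (0:ℝ)))
    · -- representation on the half line
      intro x hx
      have hd : ∀ t : ℝ, HasDerivAt (fun y => Real.exp (-(a * y)))
          (-a * Real.exp (-(a * t))) t := by
        intro t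
        have h1 : HasDerivAt (fun y : ℝ => -(a * y)) (-a) t := by
          have := ((hasDerivAt_id t).const_mul a).neg; simp only [id, mul_one] at this; exact this
        have h2 := h1.exp
        convert h2 using 1
        ring
      have hcont : Continuous fun t : ℝ => -a * Real.exp (-(a * t)) := by
        continuity
      have hftc := intervalIntegral.integral_eq_sub_of_hasDerivAt
        (f := fun y => Real.exp (-(a * y))) (fun t _ => hd t) (hcont.intervalIntegrable 0 x)
      rw [hftc]
      simp
    · -- MemLp h
      have hm : AEStronglyMeasurable (fun x : ℝ => Real.exp (-(a * x)))
          (volume.restrict (Ioi 0)) := by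
        apply Continuous.aestronglyMeasurable
        continuity
      rw [memLp_two_iff_integrable_sq hm]
      have heq : (fun x : ℝ => Real.exp (-(a * x)) ^ 2) = fun x => Real.exp (-(2 * a * x)) := by
        funext x
        rw [pow_two, ← Real.exp_add]
        ring_nf
      rw [heq]
      have := exp_neg_integrableOn_Ioi 0 (by positivity : 0 < 2 * a)
      have h' : IntegrableOn (fun x : ℝ => Real.exp (-(2 * a * x))) (Ioi 0) := by
        simpa [neg_mul] using this
      exact h'
    · -- MemLp h'
      have hm : AEStronglyMeasurable (fun x : ℝ => -a * Real.exp (-(a * x)))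
          (volume.restrict (Ioi 0)) := by
        apply Continuous.aestronglyMeasurable
        continuity
      rw [memLp_two_iff_integrable_sq hm]
      have heq : (fun x : ℝ => (-a * Real.exp (-(a * x))) ^ 2)
          = fun x => a ^ 2 * Real.exp (-(2 * a * x)) := by
        funext x
        rw [mul_pow, pow_two (Real.exp _), ← Real.exp_add]
        ring_nf
      rw [heq]
      have hbase := exp_neg_integrableOn_Ioi 0 (by positivity : 0 < 2 * a)
      have : IntegrableOn (fun x : ℝ => Real.exp (-(2 * a * x))) (Ioi 0) := by
        simpa [neg_mul] using hbase
      exact this.const_mul _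
  · -- nonzero
    right
    exact ⟨0, le_rfl, by simp⟩
  · -- value is 1
    have hsix : flowerSix n (fun _ _ => 1) = n := by
      simp [flowerSix]
    have hexp2 : ∫ x in Ioi (0:ℝ), Real.exp (-(a * x)) ^ 2 = (n:ℝ) := by
      have heq : (fun x : ℝ => Real.exp (-(a * x)) ^ 2) = fun x => Real.exp (-(2 * a * x)) := by
        funext x
        rw [pow_two, ← Real.exp_add]
        ring_nf
      rw [heq, exp_decay_integral (by positivity : 0 < 2 * a), hadef]
      field_simp
    have hmass : flowerMass n (fun _ _ => 1) (fun x => Real.exp (-(a * x))) = 2 * n := by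
      rw [flowerMass, hexp2]
      simp
      ring
    have hkin : flowerKin n (fun _ _ => 0) (fun x => -a * Real.exp (-(a * x)))
        = 1 / (4 * n) := by
      rw [flowerKin]
      have heq : (fun x : ℝ => (-a * Real.exp (-(a * x))) ^ 2)
          = fun x => a ^ 2 * Real.exp (-(2 * a * x)) := by
        funext x
        rw [mul_pow, pow_two (Real.exp _), ← Real.exp_add]
        ring_nf
      rw [heq]
      rw [MeasureTheory.integral_const_mul, exp_decay_integral (by positivity : 0 < 2 * a)]
      have : ∑ i : Fin n, ∫ x in (0:ℝ)..1, (0:ℝ) ^ 2 = 0 := by simp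
      rw [this, hadef]
      field_simp
      ring
    rw [hsix, hmass, hkin]
    have hne : (n:ℝ) ≠ 0 := ne_of_gt hn0
    field_simp
    ring

end AuxFlower2

/-- As the number of petals grows (i.e. the compact core becomes more and more
intricate, with total length `n` and bounded diameter), the sharp reduced
Gagliardo–Nirenberg constant of the flower graph converges to `1`. -/
theorem flower_CK_tendsto_one :
    Tendsto (fun n : ℕ => flowerCK n) atTop (nhds 1) := by
  have key : ∀ n : ℕ, 1 ≤ n → 1 ≤ flowerCK n ∧ flowerCK n ≤ 1 + 6 / (n:ℝ) := by
    intro n hn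
    set S := {q : ℝ | ∃ (f f' : Fin n → ℝ → ℝ) (h h' : ℝ → ℝ),
      FlowerH1 n f f' h h' ∧ flowerNonzero n f h ∧
      q = flowerSix n f / (flowerMass n f h ^ 2 * flowerKin n f' h')} with hS
    have hCK : flowerCK n = sSup S := rfl
    have hubS : ∀ q ∈ S, q ≤ 1 + 6 / (n:ℝ) := by
      rintro q ⟨f, f', h, h', H, hnz, rfl⟩
      have hnn : (0:ℝ) ≤ 1 + 6 / (n:ℝ) := by positivity
      have hmassnn : 0 ≤ flowerMass n f h := by
        apply add_nonneg
        · exact Finset.sum_nonneg fun i _ =>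
            intervalIntegral.integral_nonneg zero_le_one fun x _ => sq_nonneg _
        · exact integral_nonneg fun x => sq_nonneg _
      have hkinnn : 0 ≤ flowerKin n f' h' := by
        apply add_nonneg
        · exact Finset.sum_nonneg fun i _ =>
            intervalIntegral.integral_nonneg zero_le_one fun x _ => sq_nonneg _
        · exact integral_nonneg fun x => sq_nonneg _
      have hDnn : 0 ≤ flowerMass n f h ^ 2 * flowerKin n f' h' :=
        mul_nonneg (sq_nonneg _) hkinnn
      rcases eq_or_lt_of_le hDnn with hD0 | hD0
      · rw [← hD0, div_zero]
        exact hnn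
      · rw [div_le_iff₀ hD0]
        exact flower_upper hn H
    have hmem1 : (1:ℝ) ∈ S := by
      obtain ⟨f, f', h, h', H, hnz, heq⟩ := flower_one_mem n hn
      exact ⟨f, f', h, h', H, hnz, heq⟩
    have hbdd : BddAbove S := ⟨1 + 6 / (n:ℝ), fun q hq => hubS q hq⟩
    rw [hCK]
    exact ⟨le_csSup hbdd hmem1, csSup_le ⟨1, hmem1⟩ hubS⟩
  have htend : Tendsto (fun n : ℕ => 1 + 6 / (n:ℝ)) atTop (nhds 1) := by
    have h0 := tendsto_const_div_atTop_nhds_zero_nat (6:ℝ)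
    have := tendsto_const_nhds (x := (1:ℝ)) (f := atTop (α := ℕ)) |>.add h0
    simpa using this
  refine tendsto_of_tendsto_of_tendsto_of_le_of_le' tendsto_const_nhds htend ?_ ?_
  · filter_upwards [eventually_ge_atTop 1] with n hn using (key n hn).1
  · filter_upwards [eventually_ge_atTop 1] with n hn using (key n hn).2
end
end

section
/- Fix a circle length c > 0. The map ℓ ↦ C_{K_ℓ} is non-decreasing on the signpost graphs: for every 0 < ℓ₁ ≤ ℓ₂, one has C_{K_{ℓ₁}} ≤ C_{K_{ℓ₂}}. -/
open MeasureTheory Real Set Filter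

noncomputable section

/-- `u = (f,g,h₁,h₂) ∈ H¹(G_ℓ)` on the signpost graph `G_ℓ`: a circle `Γ` of
length `c`, a bridge `B_ℓ` of length `ℓ` joining `Γ` to a vertex `v`, and two
half-lines attached at `v`, with the continuity conditions
`f(0) = f(c) = g(0)` and `g(ℓ) = h₁(0) = h₂(0)`. -/
def SignpostH1 (c ℓ : ℝ) (f f' g g' h₁ h₁' h₂ h₂' : ℝ → ℝ) : Prop :=
  IsH1Interval c f f' ∧ IsH1Interval ℓ g g' ∧
  IsH1Half h₁ h₁' ∧ IsH1Half h₂ h₂' ∧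
  f 0 = f c ∧ f c = g 0 ∧ g ℓ = h₁ 0 ∧ h₁ 0 = h₂ 0

/-- `‖u‖₂²` on `G_ℓ`. -/
def signMass (c ℓ : ℝ) (f g h₁ h₂ : ℝ → ℝ) : ℝ :=
  (∫ x in (0:ℝ)..c, f x ^ 2) + (∫ x in (0:ℝ)..ℓ, g x ^ 2) +
  (∫ x in Ioi (0:ℝ), h₁ x ^ 2) + ∫ x in Ioi (0:ℝ), h₂ x ^ 2

/-- `‖u'‖₂²` on `G_ℓ`. -/
def signKin (c ℓ : ℝ) (f' g' h₁' h₂' : ℝ → ℝ) : ℝ :=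
  (∫ x in (0:ℝ)..c, f' x ^ 2) + (∫ x in (0:ℝ)..ℓ, g' x ^ 2) +
  (∫ x in Ioi (0:ℝ), h₁' x ^ 2) + ∫ x in Ioi (0:ℝ), h₂' x ^ 2

/-- `‖u‖_{6,K_ℓ}⁶` on the compact core `K_ℓ = Γ ∪ B_ℓ`. -/
def signSix (c ℓ : ℝ) (f g : ℝ → ℝ) : ℝ :=
  (∫ x in (0:ℝ)..c, f x ^ 6) + ∫ x in (0:ℝ)..ℓ, g x ^ 6

/-- The reduced Gagliardo–Nirenberg quotient on `G_ℓ`. -/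
def signQ (c ℓ : ℝ) (f f' g g' h₁ h₁' h₂ h₂' : ℝ → ℝ) : ℝ :=
  signSix c ℓ f g / (signMass c ℓ f g h₁ h₂ ^ 2 * signKin c ℓ f' g' h₁' h₂')

/-- `u ≢ 0` on `G_ℓ`. -/
def signNonzero (c ℓ : ℝ) (f g h₁ h₂ : ℝ → ℝ) : Prop :=
  (∃ x ∈ Icc (0:ℝ) c, f x ≠ 0) ∨ (∃ x ∈ Icc (0:ℝ) ℓ, g x ≠ 0) ∨
  (∃ x : ℝ, 0 ≤ x ∧ h₁ x ≠ 0) ∨ (∃ x : ℝ, 0 ≤ x ∧ h₂ x ≠ 0)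

/-- The sharp reduced Gagliardo–Nirenberg constant `C_{K_ℓ}` on `G_ℓ`. -/
def signCK (c ℓ : ℝ) : ℝ :=
  sSup {q : ℝ | ∃ f f' g g' h₁ h₁' h₂ h₂' : ℝ → ℝ,
    SignpostH1 c ℓ f f' g g' h₁ h₁' h₂ h₂' ∧ signNonzero c ℓ f g h₁ h₂ ∧
    q = signQ c ℓ f f' g g' h₁ h₁' h₂ h₂'}


-- ===================== Auxiliary lemmas =====================

lemma sp_ii_nonneg {L : ℝ} (hL : 0 ≤ L) (F : ℝ → ℝ) {n : ℕ} (hn : Even n) :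
    0 ≤ ∫ x in (0:ℝ)..L, F x ^ n :=
  intervalIntegral.integral_nonneg hL (fun _ _ => hn.pow_nonneg _)

lemma sp_set_nonneg (F : ℝ → ℝ) (s : Set ℝ) :
    0 ≤ ∫ x in s, F x ^ 2 :=
  integral_nonneg (fun _ => sq_nonneg _)

lemma signSix_nonneg {c ℓ : ℝ} (hc : 0 ≤ c) (hℓ : 0 ≤ ℓ) (f g : ℝ → ℝ) :
    0 ≤ signSix c ℓ f g :=
  add_nonneg (sp_ii_nonneg hc f (⟨3, rfl⟩ : Even 6)) (sp_ii_nonneg hℓ g (⟨3, rfl⟩ : Even 6))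

lemma signMass_nonneg {c ℓ : ℝ} (hc : 0 ≤ c) (hℓ : 0 ≤ ℓ) (f g h₁ h₂ : ℝ → ℝ) :
    0 ≤ signMass c ℓ f g h₁ h₂ :=
  add_nonneg (add_nonneg (add_nonneg (sp_ii_nonneg hc f even_two) (sp_ii_nonneg hℓ g even_two))
    (sp_set_nonneg h₁ _)) (sp_set_nonneg h₂ _)

lemma signKin_nonneg {c ℓ : ℝ} (hc : 0 ≤ c) (hℓ : 0 ≤ ℓ) (f' g' h₁' h₂' : ℝ → ℝ) :
    0 ≤ signKin c ℓ f' g' h₁' h₂' :=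
  add_nonneg (add_nonneg (add_nonneg (sp_ii_nonneg hc f' even_two) (sp_ii_nonneg hℓ g' even_two))
    (sp_set_nonneg h₁' _)) (sp_set_nonneg h₂' _)

lemma signQ_nonneg {c ℓ : ℝ} (hc : 0 ≤ c) (hℓ : 0 ≤ ℓ) (f f' g g' h₁ h₁' h₂ h₂' : ℝ → ℝ) :
    0 ≤ signQ c ℓ f f' g g' h₁ h₁' h₂ h₂' :=
  div_nonneg (signSix_nonneg hc hℓ f g)
    (mul_nonneg (sq_nonneg _) (signKin_nonneg hc hℓ f' g' h₁' h₂'))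

lemma IsH1Interval.continuousOn {L : ℝ} {f f' : ℝ → ℝ} (hL : 0 ≤ L)
    (H : IsH1Interval L f f') : ContinuousOn f (Icc 0 L) := by
  have h1 : ContinuousOn (fun x => f 0 + ∫ t in (0:ℝ)..x, f' t) (Icc 0 L) := by
    apply continuousOn_const.add
    have := intervalIntegral.continuousOn_primitive_interval
      (f := f') (a := 0) (b := L) (μ := volume) ?_
    · rwa [uIcc_of_le hL] at this
    · rw [uIcc_of_le hL, ← intervalIntegrable_iff_integrableOn_Icc_of_le hL]
      exact H.2.1
  exact h1.congr (fun x hx => H.1 x hx)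

lemma IsH1Interval.pow_intervalIntegrable {L : ℝ} {f f' : ℝ → ℝ} (hL : 0 ≤ L)
    (H : IsH1Interval L f f') (n : ℕ) :
    IntervalIntegrable (fun x => f x ^ n) volume 0 L := by
  apply ContinuousOn.intervalIntegrable
  rw [uIcc_of_le hL]
  exact (H.continuousOn hL).pow n

lemma sp_finite_restrict {a b : ℝ} : IsFiniteMeasure (volume.restrict (Ioc a b)) :=
  ⟨by rw [Measure.restrict_apply_univ]; exact measure_Ioc_lt_top⟩

lemma sp_memLp_restrict {F : ℝ → ℝ} (hF : MemLp F 2 (volume.restrict (Ioi (0:ℝ))))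
    {a b : ℝ} (ha : 0 ≤ a) : MemLp F 2 (volume.restrict (Ioc a b)) :=
  hF.mono_measure (Measure.restrict_mono (fun x hx => lt_of_le_of_lt ha hx.1) le_rfl)

lemma sp_memLp_intervalIntegrable {F : ℝ → ℝ} (hF : MemLp F 2 (volume.restrict (Ioi (0:ℝ))))
    {a b : ℝ} (ha : 0 ≤ a) (hab : a ≤ b) : IntervalIntegrable F volume a b := by
  rw [intervalIntegrable_iff_integrableOn_Ioc_of_le hab]
  have := sp_finite_restrict (a := a) (b := b)
  exact (sp_memLp_restrict hF ha).integrable one_le_two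

lemma sp_memLp_sq_intervalIntegrable {F : ℝ → ℝ} (hF : MemLp F 2 (volume.restrict (Ioi (0:ℝ))))
    {a b : ℝ} (ha : 0 ≤ a) (hab : a ≤ b) :
    IntervalIntegrable (fun x => F x ^ 2) volume a b := by
  rw [intervalIntegrable_iff_integrableOn_Ioc_of_le hab]
  exact (sp_memLp_restrict hF ha).integrable_sq

lemma IsH1Half.isH1Interval {h h' : ℝ → ℝ} (H : IsH1Half h h') {T : ℝ} (hT : 0 ≤ T) :
    IsH1Interval T h h' :=
  ⟨fun x hx => H.1 x hx.1, sp_memLp_intervalIntegrable H.2.2 le_rfl hT,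
    sp_memLp_sq_intervalIntegrable H.2.2 le_rfl hT⟩

lemma sp_memLp_const_eq_zero {b : ℝ}
    (hb : MemLp (fun _ : ℝ => b) 2 (volume.restrict (Ioi (0:ℝ)))) : b = 0 := by
  by_contra hb0
  have hμ : (volume.restrict (Ioi (0:ℝ))) ≠ 0 := by
    intro h
    have := congrArg (fun μ => μ (Ioi (0:ℝ))) h
    simp [Measure.restrict_apply, measurableSet_Ioi] at this
  have := hb.2
  rw [eLpNorm_const b (by norm_num) hμ] at this
  simp only [Measure.restrict_apply_univ] at this
  rw [Real.volume_Ioi] at this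
  rw [ENNReal.top_rpow_of_pos (by norm_num)] at this
  simp [ENNReal.mul_top, hb0] at this

lemma sp_sq_interval_zero {L : ℝ} {F : ℝ → ℝ} (hL : 0 ≤ L)
    (hFi : IntervalIntegrable (fun x => F x ^ 2) volume 0 L)
    (hz : (∫ x in (0:ℝ)..L, F x ^ 2) = 0) :
    ∀ᵐ x ∂(volume.restrict (Ioc (0:ℝ) L)), F x = 0 := by
  rw [intervalIntegral.integral_of_le hL] at hz
  have hi : MeasureTheory.Integrable (fun x => F x ^ 2) (volume.restrict (Ioc (0:ℝ) L)) := hFi.1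
  have := (MeasureTheory.integral_eq_zero_iff_of_nonneg
    (fun x => sq_nonneg (F x)) hi).mp hz
  filter_upwards [this] with x hx
  exact pow_eq_zero_iff (by norm_num) |>.mp hx

lemma sp_sq_Ioi_zero {F : ℝ → ℝ} (hFi : MemLp F 2 (volume.restrict (Ioi (0:ℝ))))
    (hz : (∫ x in Ioi (0:ℝ), F x ^ 2) = 0) :
    ∀ᵐ x ∂(volume.restrict (Ioi (0:ℝ))), F x = 0 := by
  have := (MeasureTheory.integral_eq_zero_iff_of_nonneg
    (fun x => sq_nonneg (F x)) hFi.integrable_sq).mp hz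
  filter_upwards [this] with x hx
  exact pow_eq_zero_iff (by norm_num) |>.mp hx

lemma sp_primitive_zero {L x : ℝ} {F : ℝ → ℝ} (hx : 0 ≤ x) (hxL : x ≤ L)
    (hae : ∀ᵐ t ∂(volume.restrict (Ioc (0:ℝ) L)), F t = 0) :
    (∫ t in (0:ℝ)..x, F t) = 0 := by
  rw [intervalIntegral.integral_of_le hx]
  have hsub : Ioc (0:ℝ) x ⊆ Ioc 0 L := Ioc_subset_Ioc_right hxL
  have hae' : ∀ᵐ t ∂(volume.restrict (Ioc (0:ℝ) x)), F t = 0 :=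
    Filter.Eventually.filter_mono (MeasureTheory.ae_mono (Measure.restrict_mono hsub le_rfl)) hae
  calc (∫ t in Ioc (0:ℝ) x, F t) = ∫ _ in Ioc (0:ℝ) x, (0:ℝ) :=
        MeasureTheory.integral_congr_ae hae'
    _ = 0 := by simp

lemma sp_primitive_zero_Ioi {x : ℝ} {F : ℝ → ℝ} (hx : 0 ≤ x)
    (hae : ∀ᵐ t ∂(volume.restrict (Ioi (0:ℝ))), F t = 0) :
    (∫ t in (0:ℝ)..x, F t) = 0 := by
  rw [intervalIntegral.integral_of_le hx]
  have hae' : ∀ᵐ t ∂(volume.restrict (Ioc (0:ℝ) x)), F t = 0 :=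
    Filter.Eventually.filter_mono
      (MeasureTheory.ae_mono (Measure.restrict_mono Ioc_subset_Ioi_self le_rfl)) hae
  calc (∫ t in Ioc (0:ℝ) x, F t) = ∫ _ in Ioc (0:ℝ) x, (0:ℝ) :=
        MeasureTheory.integral_congr_ae hae'
    _ = 0 := by simp

/-- If the kinetic part of `f` vanishes then `f` is constant on `[0,L]`. -/
lemma sp_interval_const {L : ℝ} {f f' : ℝ → ℝ} (hL : 0 ≤ L) (H : IsH1Interval L f f')
    (hz : (∫ x in (0:ℝ)..L, f' x ^ 2) = 0) :
    ∀ x ∈ Icc (0:ℝ) L, f x = f 0 := by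
  intro x hx
  rw [H.1 x hx, sp_primitive_zero hx.1 hx.2 (sp_sq_interval_zero hL H.2.2 hz), add_zero]

/-- If the kinetic part of `h` vanishes on the half-line then `h 0 = 0` and `h` vanishes. -/
lemma sp_half_const {h h' : ℝ → ℝ} (H : IsH1Half h h')
    (hz : (∫ x in Ioi (0:ℝ), h' x ^ 2) = 0) : h 0 = 0 := by
  have hae := sp_sq_Ioi_zero H.2.2 hz
  have hconst : ∀ x : ℝ, 0 ≤ x → h x = h 0 := by
    intro x hx
    rw [H.1 x hx, sp_primitive_zero_Ioi hx hae, add_zero]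
  apply sp_memLp_const_eq_zero (b := h 0)
  apply H.2.1.ae_eq
  rw [Filter.EventuallyEq]
  rw [MeasureTheory.ae_restrict_iff' measurableSet_Ioi]
  exact Filter.Eventually.of_forall (fun x hx => hconst x (le_of_lt hx))

lemma sp_mass_zero_six_zero {L : ℝ} {f f' : ℝ → ℝ} (hL : 0 ≤ L) (H : IsH1Interval L f f')
    (hz : (∫ x in (0:ℝ)..L, f x ^ 2) = 0) : (∫ x in (0:ℝ)..L, f x ^ 6) = 0 := by
  have hae := sp_sq_interval_zero hL (by simpa using H.pow_intervalIntegrable hL 2) hz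
  rw [intervalIntegral.integral_of_le hL]
  calc (∫ x in Ioc (0:ℝ) L, f x ^ 6) = ∫ _ in Ioc (0:ℝ) L, (0:ℝ) := by
        apply MeasureTheory.integral_congr_ae
        filter_upwards [hae] with x hx
        rw [hx]; norm_num
    _ = 0 := by simp

lemma sp_six_pos_witness {L : ℝ} {f : ℝ → ℝ} (hL : 0 ≤ L)
    (hz : (∫ x in (0:ℝ)..L, f x ^ 6) ≠ 0) : ∃ x ∈ Icc (0:ℝ) L, f x ≠ 0 := by
  by_contra hcon
  push_neg at hcon
  apply hz
  rw [show (∫ x in (0:ℝ)..L, f x ^ 6) = ∫ x in (0:ℝ)..L, (0:ℝ) from ?_]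
  · simp
  apply intervalIntegral.integral_congr
  intro x hx
  rw [uIcc_of_le hL] at hx
  simp only []
  rw [hcon x hx]; norm_num

lemma sp_map_shift (δ : ℝ) :
    Measure.map (fun x => x + δ) (volume.restrict (Ioi (0:ℝ))) = volume.restrict (Ioi δ) := by
  have h1 : ((fun x : ℝ => x + δ) ⁻¹' Ioi δ) = Ioi 0 := by
    ext x; simp [lt_add_iff_pos_left]
  calc Measure.map (fun x => x + δ) (volume.restrict (Ioi 0))
      = Measure.map (fun x => x + δ) (volume.restrict ((fun x : ℝ => x + δ) ⁻¹' Ioi δ)) := by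
        rw [h1]
    _ = (Measure.map (fun x => x + δ) volume).restrict (Ioi δ) :=
        (Measure.restrict_map (measurable_add_const δ) measurableSet_Ioi).symm
    _ = volume.restrict (Ioi δ) := by rw [map_add_right_eq_self]

lemma sp_shift_memLp {F : ℝ → ℝ} (hF : MemLp F 2 (volume.restrict (Ioi (0:ℝ))))
    {δ : ℝ} (hδ : 0 ≤ δ) :
    MemLp (fun x => F (x + δ)) 2 (volume.restrict (Ioi (0:ℝ))) := by
  have h1 : MemLp F 2 (volume.restrict (Ioi δ)) :=
    hF.mono_measure (Measure.restrict_mono (Ioi_subset_Ioi hδ) le_rfl)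
  rw [← sp_map_shift δ] at h1
  exact ((measurableEmbedding_addRight δ).memLp_map_measure_iff).mp h1

lemma sp_shift_integral (F : ℝ → ℝ) (δ : ℝ) :
    (∫ x in Ioi (0:ℝ), F (x + δ) ^ 2) = ∫ x in Ioi δ, F x ^ 2 := by
  rw [← sp_map_shift δ]
  exact ((measurableEmbedding_addRight δ).integral_map (g := fun x => F x ^ 2)).symm

lemma sp_split_Ioi (F : ℝ → ℝ) {δ : ℝ} (hδ : 0 ≤ δ)
    (hFi : MeasureTheory.Integrable (fun x => F x ^ 2) (volume.restrict (Ioi (0:ℝ)))) :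
    (∫ x in Ioi (0:ℝ), F x ^ 2) = (∫ x in (0:ℝ)..δ, F x ^ 2) + ∫ x in Ioi δ, F x ^ 2 := by
  have hon : MeasureTheory.IntegrableOn (fun x => F x ^ 2) (Ioi (0:ℝ)) volume := hFi
  rw [intervalIntegral.integral_of_le hδ]
  rw [← MeasureTheory.setIntegral_union (Ioc_disjoint_Ioi le_rfl) measurableSet_Ioi
    (hon.mono_set Ioc_subset_Ioi_self) (hon.mono_set (Ioi_subset_Ioi hδ))]
  rw [Ioc_union_Ioi_eq_Ioi hδ]

lemma sp_glue {ℓ₁ ℓ₂ : ℝ} (h0 : 0 ≤ ℓ₁) (h12 : ℓ₁ ≤ ℓ₂) (u v : ℝ → ℝ)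
    (hu : IntervalIntegrable u volume 0 ℓ₁) (hv : IntervalIntegrable v volume 0 (ℓ₂ - ℓ₁)) :
    IntervalIntegrable (fun x => if x ≤ ℓ₁ then u x else v (x - ℓ₁)) volume 0 ℓ₂ ∧
    (∫ x in (0:ℝ)..ℓ₂, (if x ≤ ℓ₁ then u x else v (x - ℓ₁))) =
      (∫ x in (0:ℝ)..ℓ₁, u x) + ∫ x in (0:ℝ)..(ℓ₂ - ℓ₁), v x := by
  have hδ : 0 ≤ ℓ₂ - ℓ₁ := by linarith
  have hvs : IntervalIntegrable (fun x => v (x - ℓ₁)) volume ℓ₁ ℓ₂ := by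
    have := hv.comp_sub_right ℓ₁
    simpa using this
  have hu' : IntervalIntegrable (fun x => if x ≤ ℓ₁ then u x else v (x - ℓ₁)) volume 0 ℓ₁ := by
    rw [intervalIntegrable_iff_integrableOn_Ioc_of_le h0] at hu ⊢
    exact hu.congr_fun (fun x hx => by simp [hx.2]) measurableSet_Ioc
  have hv' : IntervalIntegrable (fun x => if x ≤ ℓ₁ then u x else v (x - ℓ₁)) volume ℓ₁ ℓ₂ := by
    rw [intervalIntegrable_iff_integrableOn_Ioc_of_le h12] at hvs ⊢
    exact hvs.congr_fun (fun x hx => by simp [not_le.mpr hx.1]) measurableSet_Ioc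
  refine ⟨hu'.trans hv', ?_⟩
  rw [← intervalIntegral.integral_add_adjacent_intervals hu' hv']
  congr 1
  · apply intervalIntegral.integral_congr
    intro x hx
    rw [uIcc_of_le h0] at hx
    simp [hx.2]
  · rw [show (∫ x in ℓ₁..ℓ₂, (if x ≤ ℓ₁ then u x else v (x - ℓ₁))) =
        ∫ x in ℓ₁..ℓ₂, v (x - ℓ₁) from ?_]
    · rw [intervalIntegral.integral_comp_sub_right v ℓ₁, sub_self]
    apply intervalIntegral.integral_congr_ae
    apply Filter.Eventually.of_forall
    intro x hx
    rw [uIoc_of_le h12] at hx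
    simp [not_le.mpr hx.1]

lemma sp_extend {c ℓ₁ ℓ₂ : ℝ} (hc : 0 < c) (hl1 : 0 < ℓ₁) (h12 : ℓ₁ < ℓ₂)
    {f f' g g' h h' : ℝ → ℝ}
    (Hf : IsH1Interval c f f') (Hg : IsH1Interval ℓ₁ g g') (Hh : IsH1Half h h')
    (e1 : f 0 = f c) (e2 : f c = g 0) (e3 : g ℓ₁ = h 0) :
    ∃ G G' H H' : ℝ → ℝ,
      SignpostH1 c ℓ₂ f f' G G' H H' H H' ∧
      (((∃ x ∈ Icc (0:ℝ) c, f x ≠ 0) ∨ (∃ x ∈ Icc (0:ℝ) ℓ₁, g x ≠ 0) ∨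
        (∃ x : ℝ, 0 ≤ x ∧ h x ≠ 0)) → signNonzero c ℓ₂ f G H H) ∧
      signSix c ℓ₁ f g ≤ signSix c ℓ₂ f G ∧
      signMass c ℓ₂ f G H H ≤ (∫ x in (0:ℝ)..c, f x ^ 2) + (∫ x in (0:ℝ)..ℓ₁, g x ^ 2)
        + 2 * ∫ x in Ioi (0:ℝ), h x ^ 2 ∧
      (∫ x in (0:ℝ)..c, f x ^ 2) + (∫ x in (0:ℝ)..ℓ₁, g x ^ 2) ≤ signMass c ℓ₂ f G H H ∧
      signKin c ℓ₂ f' G' H' H' ≤ (∫ x in (0:ℝ)..c, f' x ^ 2) + (∫ x in (0:ℝ)..ℓ₁, g' x ^ 2)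
        + 2 * ∫ x in Ioi (0:ℝ), h' x ^ 2 ∧
      (∫ x in (0:ℝ)..c, f' x ^ 2) + (∫ x in (0:ℝ)..ℓ₁, g' x ^ 2) + (∫ x in Ioi (0:ℝ), h' x ^ 2)
        ≤ signKin c ℓ₂ f' G' H' H' := by
  have hδ : 0 ≤ ℓ₂ - ℓ₁ := by linarith
  have hl1' : 0 ≤ ℓ₁ := hl1.le
  have h12' : ℓ₁ ≤ ℓ₂ := h12.le
  set δ := ℓ₂ - ℓ₁ with hδdef
  -- the new functions
  set G : ℝ → ℝ := fun x => if x ≤ ℓ₁ then g x else h (x - ℓ₁) with hG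
  set G' : ℝ → ℝ := fun x => if x ≤ ℓ₁ then g' x else h' (x - ℓ₁) with hG'
  set H : ℝ → ℝ := fun x => h (x + δ) with hH
  set H' : ℝ → ℝ := fun x => h' (x + δ) with hH'
  -- integrability of pieces of h on [0, δ]
  have hIsInt : IsH1Interval δ h h' := Hh.isH1Interval hδ
  have hh2 : IntervalIntegrable (fun x => h x ^ 2) volume 0 δ :=
    hIsInt.pow_intervalIntegrable hδ 2
  have hh6 : IntervalIntegrable (fun x => h x ^ 6) volume 0 δ :=
    hIsInt.pow_intervalIntegrable hδ 6
  have hg2 : IntervalIntegrable (fun x => g x ^ 2) volume 0 ℓ₁ :=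
    Hg.pow_intervalIntegrable hl1' 2
  have hg6 : IntervalIntegrable (fun x => g x ^ 6) volume 0 ℓ₁ :=
    Hg.pow_intervalIntegrable hl1' 6
  -- glueing data
  have glue1 := sp_glue hl1' h12' g' h' Hg.2.1 hIsInt.2.1
  have glue2 := sp_glue hl1' h12' (fun x => g' x ^ 2) (fun x => h' x ^ 2) Hg.2.2 hIsInt.2.2
  have glue3 := sp_glue hl1' h12' (fun x => g x ^ 2) (fun x => h x ^ 2) hg2 hh2
  have glue4 := sp_glue hl1' h12' (fun x => g x ^ 6) (fun x => h x ^ 6) hg6 hh6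
  -- rewriting powers of G, G' as glued powers
  have powG : ∀ n : ℕ, (fun x => G x ^ n) =
      fun x => if x ≤ ℓ₁ then g x ^ n else (fun y => h y ^ n) (x - ℓ₁) := by
    intro n; funext x; by_cases hx : x ≤ ℓ₁ <;> simp [hG, hx]
  have powG' : ∀ n : ℕ, (fun x => G' x ^ n) =
      fun x => if x ≤ ℓ₁ then g' x ^ n else (fun y => h' y ^ n) (x - ℓ₁) := by
    intro n; funext x; by_cases hx : x ≤ ℓ₁ <;> simp [hG', hx]
  -- interval-integral identities
  have iG2 : (∫ x in (0:ℝ)..ℓ₂, G x ^ 2) =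
      (∫ x in (0:ℝ)..ℓ₁, g x ^ 2) + ∫ x in (0:ℝ)..δ, h x ^ 2 := by
    rw [show (∫ x in (0:ℝ)..ℓ₂, G x ^ 2) = ∫ x in (0:ℝ)..ℓ₂,
      (if x ≤ ℓ₁ then g x ^ 2 else (fun y => h y ^ 2) (x - ℓ₁)) from by rw [← powG 2]]
    exact glue3.2
  have iG6 : (∫ x in (0:ℝ)..ℓ₂, G x ^ 6) =
      (∫ x in (0:ℝ)..ℓ₁, g x ^ 6) + ∫ x in (0:ℝ)..δ, h x ^ 6 := by
    rw [show (∫ x in (0:ℝ)..ℓ₂, G x ^ 6) = ∫ x in (0:ℝ)..ℓ₂,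
      (if x ≤ ℓ₁ then g x ^ 6 else (fun y => h y ^ 6) (x - ℓ₁)) from by rw [← powG 6]]
    exact glue4.2
  have iG'2 : (∫ x in (0:ℝ)..ℓ₂, G' x ^ 2) =
      (∫ x in (0:ℝ)..ℓ₁, g' x ^ 2) + ∫ x in (0:ℝ)..δ, h' x ^ 2 := by
    rw [show (∫ x in (0:ℝ)..ℓ₂, G' x ^ 2) = ∫ x in (0:ℝ)..ℓ₂,
      (if x ≤ ℓ₁ then g' x ^ 2 else (fun y => h' y ^ 2) (x - ℓ₁)) from by rw [← powG' 2]]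
    exact glue2.2
  -- half-line identities
  have hm : (∫ x in Ioi (0:ℝ), h x ^ 2) =
      (∫ x in (0:ℝ)..δ, h x ^ 2) + ∫ x in Ioi (0:ℝ), H x ^ 2 := by
    rw [show (∫ x in Ioi (0:ℝ), H x ^ 2) = ∫ x in Ioi δ, h x ^ 2 from sp_shift_integral h δ]
    exact sp_split_Ioi h hδ Hh.2.1.integrable_sq
  have hk : (∫ x in Ioi (0:ℝ), h' x ^ 2) =
      (∫ x in (0:ℝ)..δ, h' x ^ 2) + ∫ x in Ioi (0:ℝ), H' x ^ 2 := by
    rw [show (∫ x in Ioi (0:ℝ), H' x ^ 2) = ∫ x in Ioi δ, h' x ^ 2 from sp_shift_integral h' δ]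
    exact sp_split_Ioi h' hδ Hh.2.2.integrable_sq
  -- nonnegativity facts
  have nn_hδ2 : 0 ≤ ∫ x in (0:ℝ)..δ, h x ^ 2 := sp_ii_nonneg hδ h even_two
  have nn_hδ6 : 0 ≤ ∫ x in (0:ℝ)..δ, h x ^ 6 := sp_ii_nonneg hδ h (⟨3, rfl⟩ : Even 6)
  have nn_h'δ2 : 0 ≤ ∫ x in (0:ℝ)..δ, h' x ^ 2 := sp_ii_nonneg hδ h' even_two
  have nn_H2 : 0 ≤ ∫ x in Ioi (0:ℝ), H x ^ 2 := sp_set_nonneg H _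
  have nn_H'2 : 0 ≤ ∫ x in Ioi (0:ℝ), H' x ^ 2 := sp_set_nonneg H' _
  -- FTC for G
  have ftcG : ∀ x ∈ Icc (0:ℝ) ℓ₂, G x = G 0 + ∫ t in (0:ℝ)..x, G' t := by
    intro x hx
    have hG0 : G 0 = g 0 := by simp [hG, hl1']
    by_cases hxl : x ≤ ℓ₁
    · have : (∫ t in (0:ℝ)..x, G' t) = ∫ t in (0:ℝ)..x, g' t := by
        apply intervalIntegral.integral_congr
        intro t ht
        rw [uIcc_of_le hx.1] at ht
        simp [hG', le_trans ht.2 hxl]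
      rw [this, hG0]
      simpa [hG, hxl] using Hg.1 x ⟨hx.1, hxl⟩
    · push_neg at hxl
      have hx1 : 0 ≤ x - ℓ₁ := by linarith
      have hx2 : x - ℓ₁ ≤ δ := by simp only [hδdef]; linarith [hx.2]
      have hvx : IntervalIntegrable h' volume 0 (x - ℓ₁) :=
        sp_memLp_intervalIntegrable Hh.2.2 le_rfl hx1
      have gluex := sp_glue hl1' (le_of_lt hxl) g' h' Hg.2.1 hvx
      have hint : (∫ t in (0:ℝ)..x, G' t) =
          (∫ t in (0:ℝ)..ℓ₁, g' t) + ∫ t in (0:ℝ)..(x - ℓ₁), h' t := gluex.2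
      have hgl : g ℓ₁ = g 0 + ∫ t in (0:ℝ)..ℓ₁, g' t := Hg.1 ℓ₁ ⟨hl1', le_rfl⟩
      have hhx : h (x - ℓ₁) = h 0 + ∫ t in (0:ℝ)..(x - ℓ₁), h' t := Hh.1 _ hx1
      have hGx : G x = h (x - ℓ₁) := by simp [hG, not_le.mpr hxl]
      rw [hGx, hhx, ← e3, hgl, hG0, hint]
      ring
  -- FTC for H
  have ftcH : ∀ x : ℝ, 0 ≤ x → H x = H 0 + ∫ t in (0:ℝ)..x, H' t := by
    intro x hx
    have i1 : IntervalIntegrable h' volume 0 δ := hIsInt.2.1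
    have i2 : IntervalIntegrable h' volume δ (x + δ) :=
      sp_memLp_intervalIntegrable Hh.2.2 hδ (by linarith)
    have iadd := intervalIntegral.integral_add_adjacent_intervals i1 i2
    have hshift : (∫ t in (0:ℝ)..x, H' t) = ∫ t in δ..(x + δ), h' t := by
      rw [show (∫ t in (0:ℝ)..x, H' t) = ∫ t in (0:ℝ)..x, h' (t + δ) from rfl]
      rw [intervalIntegral.integral_comp_add_right h' δ, zero_add]
    have e4 : H x = h 0 + ∫ t in (0:ℝ)..(x + δ), h' t := Hh.1 (x + δ) (by linarith)
    have e5 : H 0 = h 0 + ∫ t in (0:ℝ)..δ, h' t := by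
      rw [show H 0 = h δ from by simp [hH]]
      exact Hh.1 δ hδ
    rw [e4, e5, hshift, ← iadd]
    ring
  -- H¹ structure
  have memG : IsH1Interval ℓ₂ G G' := by
    refine ⟨ftcG, glue1.1, ?_⟩
    rw [powG' 2]
    exact glue2.1
  have memH : IsH1Half H H' :=
    ⟨ftcH, sp_shift_memLp Hh.2.1 hδ, sp_shift_memLp Hh.2.2 hδ⟩
  refine ⟨G, G', H, H', ⟨Hf, memG, memH, memH, e1, ?_, ?_, rfl⟩, ?_, ?_, ?_, ?_, ?_, ?_⟩
  · -- f c = G 0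
    rw [show G 0 = g 0 from by simp [hG, hl1']]; exact e2
  · -- G ℓ₂ = H 0
    rw [show G ℓ₂ = h δ from by simp [hG, hδdef, not_le.mpr h12],
      show H 0 = h δ from by simp [hH]]
  · -- nonzero transfer
    rintro (hw | ⟨x, hx, hne⟩ | ⟨x, hx0, hne⟩)
    · exact Or.inl hw
    · refine Or.inr (Or.inl ⟨x, ⟨hx.1, le_trans hx.2 h12'⟩, ?_⟩)
      rwa [show G x = g x from by simp [hG, hx.2]]
    · by_cases hxδ : x ≤ δ
      · refine Or.inr (Or.inl ⟨ℓ₁ + x, ⟨by linarith, by simp only [hδdef] at hxδ; linarith⟩, ?_⟩)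
        by_cases hx0' : ℓ₁ + x ≤ ℓ₁
        · have hx00 : x = 0 := le_antisymm (by linarith) hx0
          rw [show G (ℓ₁ + x) = g (ℓ₁ + x) from by simp [hG, hx0']]
          rw [hx00] at hne ⊢
          rw [add_zero, e3]
          exact hne
        · rw [show G (ℓ₁ + x) = h (ℓ₁ + x - ℓ₁) from by simp [hG, hx0']]
          rwa [add_sub_cancel_left]
      · push_neg at hxδ
        refine Or.inr (Or.inr (Or.inl ⟨x - δ, ⟨by linarith, ?_⟩⟩))
        rw [show H (x - δ) = h x from by simp [hH]]
        exact hne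
  · -- six comparison
    unfold signSix
    rw [iG6]
    linarith
  · -- mass upper bound
    unfold signMass
    rw [iG2]
    have := hm
    linarith
  · -- mass lower bound
    unfold signMass
    rw [iG2]
    have h1' : (∫ x in (0:ℝ)..δ, h x ^ 2) ≤ ∫ x in Ioi (0:ℝ), h x ^ 2 := by linarith
    linarith
  · -- kin upper bound
    unfold signKin
    rw [iG'2]
    linarith
  · -- kin lower bound
    unfold signKin
    rw [iG'2]
    linarith

lemma sp_stretch_quot {lam Sf Sg Mf Mg m1 m2 Kf Kg k1 k2 : ℝ} (hlam : 1 ≤ lam)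
    (nSf : 0 ≤ Sf) (nSg : 0 ≤ Sg) (nMf : 0 ≤ Mf) (nMg : 0 ≤ Mg) (nm1 : 0 ≤ m1) (nm2 : 0 ≤ m2)
    (nKf : 0 ≤ Kf) (nKg : 0 ≤ Kg) (nk1 : 0 ≤ k1) (nk2 : 0 ≤ k2) :
    (Sf + Sg) / ((Mf + Mg + m1 + m2) ^ 2 * (Kf + Kg + k1 + k2)) ≤
      lam ^ 2 * ((Sf + lam⁻¹ * Sg) /
        ((Mf + lam⁻¹ * Mg + m1 + m2) ^ 2 * (Kf + lam * Kg + k1 + k2))) := by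
  have hlam0 : 0 < lam := lt_of_lt_of_le one_pos hlam
  have hlamI : lam⁻¹ ≤ 1 := inv_le_one_of_one_le₀ hlam
  have hlamI0 : 0 < lam⁻¹ := inv_pos.mpr hlam0
  have hcancel : lam * lam⁻¹ = 1 := mul_inv_cancel₀ (ne_of_gt hlam0)
  have nM₂ : (0:ℝ) ≤ Mf + Mg + m1 + m2 := by positivity
  have nK₂ : (0:ℝ) ≤ Kf + Kg + k1 + k2 := by positivity
  have nM₁ : (0:ℝ) ≤ Mf + lam⁻¹ * Mg + m1 + m2 := by positivity
  have nK₁ : (0:ℝ) ≤ Kf + lam * Kg + k1 + k2 := by positivity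
  have nN₁ : (0:ℝ) ≤ Sf + lam⁻¹ * Sg := by positivity
  have nN₂ : (0:ℝ) ≤ Sf + Sg := by positivity
  rcases eq_or_lt_of_le (mul_nonneg (sq_nonneg (Mf + Mg + m1 + m2)) nK₂) with hD2 | hD2
  · rw [← hD2, div_zero]
    exact mul_nonneg (sq_nonneg lam) (div_nonneg nN₁ (mul_nonneg (sq_nonneg _) nK₁))
  have hKpos : 0 < Kf + Kg + k1 + k2 := by
    rcases lt_or_eq_of_le nK₂ with hp | hp
    · exact hp
    · exfalso; rw [← hp, mul_zero] at hD2; exact lt_irrefl 0 hD2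
  have hMpos : 0 < Mf + Mg + m1 + m2 := by
    have hne : Mf + Mg + m1 + m2 ≠ 0 := by
      intro h0; rw [h0] at hD2; simp at hD2
    exact lt_of_le_of_ne nM₂ (Ne.symm hne)
  have hM₁pos : 0 < Mf + lam⁻¹ * Mg + m1 + m2 := by
    have t1 : lam⁻¹ * Mf ≤ Mf := mul_le_of_le_one_left nMf hlamI
    have t2 : lam⁻¹ * m1 ≤ m1 := mul_le_of_le_one_left nm1 hlamI
    have t3 : lam⁻¹ * m2 ≤ m2 := mul_le_of_le_one_left nm2 hlamI
    have hstep : lam⁻¹ * (Mf + Mg + m1 + m2) =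
        lam⁻¹ * Mf + lam⁻¹ * Mg + lam⁻¹ * m1 + lam⁻¹ * m2 := by ring
    have hpos : 0 < lam⁻¹ * (Mf + Mg + m1 + m2) := mul_pos hlamI0 hMpos
    rw [hstep] at hpos
    linarith
  have hK₁pos : 0 < Kf + lam * Kg + k1 + k2 := by
    have : Kg ≤ lam * Kg := le_mul_of_one_le_left nKg hlam
    linarith
  have hD1 : 0 < (Mf + lam⁻¹ * Mg + m1 + m2) ^ 2 * (Kf + lam * Kg + k1 + k2) :=
    mul_pos (pow_pos hM₁pos 2) hK₁pos
  have hD2' : 0 < (Mf + Mg + m1 + m2) ^ 2 * (Kf + Kg + k1 + k2) :=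
    mul_pos (pow_pos hMpos 2) hKpos
  rw [← mul_div_assoc, div_le_div_iff₀ hD2' hD1]
  have hMle : Mf + lam⁻¹ * Mg + m1 + m2 ≤ Mf + Mg + m1 + m2 := by
    have : lam⁻¹ * Mg ≤ Mg := mul_le_of_le_one_left nMg hlamI
    linarith
  have hKle : Kf + lam * Kg + k1 + k2 ≤ lam * (Kf + Kg + k1 + k2) := by
    have t1 : Kf ≤ lam * Kf := le_mul_of_one_le_left nKf hlam
    have t2 : k1 ≤ lam * k1 := le_mul_of_one_le_left nk1 hlam
    have t3 : k2 ≤ lam * k2 := le_mul_of_one_le_left nk2 hlam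
    have hexp : lam * (Kf + Kg + k1 + k2) = lam * Kf + lam * Kg + lam * k1 + lam * k2 := by
      ring
    rw [hexp]
    linarith
  have hNle : Sf + Sg ≤ lam * (Sf + lam⁻¹ * Sg) := by
    have t1 : Sf ≤ lam * Sf := le_mul_of_one_le_left nSf hlam
    have hexp : lam * (Sf + lam⁻¹ * Sg) = lam * Sf + (lam * lam⁻¹) * Sg := by ring
    rw [hexp, hcancel, one_mul]
    linarith
  have hDle : (Mf + lam⁻¹ * Mg + m1 + m2) ^ 2 * (Kf + lam * Kg + k1 + k2) ≤
      (Mf + Mg + m1 + m2) ^ 2 * (lam * (Kf + Kg + k1 + k2)) :=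
    mul_le_mul (pow_le_pow_left₀ nM₁ hMle 2) hKle (le_of_lt hK₁pos) (sq_nonneg _)
  calc (Sf + Sg) * ((Mf + lam⁻¹ * Mg + m1 + m2) ^ 2 * (Kf + lam * Kg + k1 + k2))
      ≤ (lam * (Sf + lam⁻¹ * Sg)) * ((Mf + Mg + m1 + m2) ^ 2 * (lam * (Kf + Kg + k1 + k2))) :=
        mul_le_mul hNle hDle (le_of_lt hD1) (mul_nonneg (le_of_lt hlam0) nN₁)
    _ = lam ^ 2 * (Sf + lam⁻¹ * Sg) * ((Mf + Mg + m1 + m2) ^ 2 * (Kf + Kg + k1 + k2)) := by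
        ring

lemma sp_stretch {c ℓ₁ ℓ₂ : ℝ} (hc : 0 < c) (hl1 : 0 < ℓ₁) (h12 : ℓ₁ ≤ ℓ₂)
    {f f' g g' h₁ h₁' h₂ h₂' : ℝ → ℝ}
    (H : SignpostH1 c ℓ₂ f f' g g' h₁ h₁' h₂ h₂') (Hnz : signNonzero c ℓ₂ f g h₁ h₂) :
    ∃ G G' : ℝ → ℝ, SignpostH1 c ℓ₁ f f' G G' h₁ h₁' h₂ h₂' ∧
      signNonzero c ℓ₁ f G h₁ h₂ ∧
      signQ c ℓ₂ f f' g g' h₁ h₁' h₂ h₂' ≤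
        (ℓ₂ / ℓ₁) ^ 2 * signQ c ℓ₁ f f' G G' h₁ h₁' h₂ h₂' := by
  obtain ⟨Hf, Hg, Hh1, Hh2, e1, e2, e3, e4⟩ := H
  have hl2 : 0 < ℓ₂ := lt_of_lt_of_le hl1 h12
  set lam := ℓ₂ / ℓ₁ with hlamdef
  have hlam1 : 1 ≤ lam := (one_le_div hl1).mpr h12
  have hlam0 : 0 < lam := lt_of_lt_of_le one_pos hlam1
  have hlamne : lam ≠ 0 := ne_of_gt hlam0
  have hlaml : lam * ℓ₁ = ℓ₂ := div_mul_cancel₀ ℓ₂ (ne_of_gt hl1)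
  set G : ℝ → ℝ := fun x => g (lam * x) with hG
  set G' : ℝ → ℝ := fun x => lam * g' (lam * x) with hG'
  -- integral identities
  have comp_int : ∀ F : ℝ → ℝ, (∫ x in (0:ℝ)..ℓ₁, F (lam * x)) = lam⁻¹ * ∫ x in (0:ℝ)..ℓ₂, F x := by
    intro F
    rw [intervalIntegral.integral_comp_mul_left F hlamne, mul_zero, hlaml, smul_eq_mul]
  have iG2 : (∫ x in (0:ℝ)..ℓ₁, G x ^ 2) = lam⁻¹ * ∫ x in (0:ℝ)..ℓ₂, g x ^ 2 :=
    comp_int (fun y => g y ^ 2)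
  have iG6 : (∫ x in (0:ℝ)..ℓ₁, G x ^ 6) = lam⁻¹ * ∫ x in (0:ℝ)..ℓ₂, g x ^ 6 :=
    comp_int (fun y => g y ^ 6)
  have iG'2 : (∫ x in (0:ℝ)..ℓ₁, G' x ^ 2) = lam * ∫ x in (0:ℝ)..ℓ₂, g' x ^ 2 := by
    have hrw : (fun x => G' x ^ 2) = fun x => lam ^ 2 * (fun y => g' y ^ 2) (lam * x) := by
      funext x; simp [hG']; ring
    rw [hrw, intervalIntegral.integral_const_mul, comp_int (fun y => g' y ^ 2)]
    field_simp
  -- integrability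
  have hdiv0 : (0:ℝ) / lam = 0 := zero_div lam
  have hdivl : ℓ₂ / lam = ℓ₁ := by
    rw [hlamdef]
    field_simp
  have iiG'base : IntervalIntegrable (fun x => g' (lam * x)) volume 0 ℓ₁ := by
    have := Hg.2.1.comp_mul_left (c := lam)
    rwa [hdiv0, hdivl] at this
  have iiG' : IntervalIntegrable G' volume 0 ℓ₁ := by
    rw [hG']
    exact iiG'base.const_mul lam
  have iiG'2 : IntervalIntegrable (fun x => G' x ^ 2) volume 0 ℓ₁ := by
    have hbase : IntervalIntegrable (fun x => (fun y => g' y ^ 2) (lam * x)) volume 0 ℓ₁ := by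
      have := Hg.2.2.comp_mul_left (c := lam)
      rwa [hdiv0, hdivl] at this
    have hrw : (fun x => G' x ^ 2) = fun x => lam ^ 2 * (fun y => g' y ^ 2) (lam * x) := by
      funext x; simp [hG']; ring
    rw [hrw]
    exact hbase.const_mul (lam ^ 2)
  -- FTC
  have ftcG : ∀ x ∈ Icc (0:ℝ) ℓ₁, G x = G 0 + ∫ t in (0:ℝ)..x, G' t := by
    intro x hx
    have hmem : lam * x ∈ Icc (0:ℝ) ℓ₂ := by
      constructor
      · exact mul_nonneg (le_of_lt hlam0) hx.1
      · rw [← hlaml]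
        exact mul_le_mul_of_nonneg_left hx.2 (le_of_lt hlam0)
    have hint : (∫ t in (0:ℝ)..x, G' t) = ∫ t in (0:ℝ)..(lam * x), g' t := by
      rw [hG']
      rw [intervalIntegral.integral_const_mul]
      rw [intervalIntegral.integral_comp_mul_left g' hlamne, mul_zero, smul_eq_mul]
      rw [← mul_assoc, mul_inv_cancel₀ hlamne, one_mul]
    rw [hint]
    have hG0 : G 0 = g 0 := by simp [hG]
    rw [hG0]
    simpa [hG] using Hg.1 (lam * x) hmem
  have memG : IsH1Interval ℓ₁ G G' := ⟨ftcG, iiG', iiG'2⟩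
  refine ⟨G, G', ⟨Hf, memG, Hh1, Hh2, e1, ?_, ?_, e4⟩, ?_, ?_⟩
  · rw [show G 0 = g 0 from by simp [hG]]; exact e2
  · rw [show G ℓ₁ = g ℓ₂ from by rw [hG]; simp only []; rw [hlaml]]
    exact e3
  · -- nonzero
    rcases Hnz with hw | ⟨x, hx, hne⟩ | hw | hw
    · exact Or.inl hw
    · refine Or.inr (Or.inl ⟨x / lam, ⟨div_nonneg hx.1 (le_of_lt hlam0), ?_⟩, ?_⟩)
      · rw [div_le_iff₀ hlam0, mul_comm, hlaml]
        exact hx.2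
      · rw [show G (x / lam) = g (lam * (x / lam)) from rfl]
        rw [mul_div_cancel₀ x hlamne]
        exact hne
    · exact Or.inr (Or.inr (Or.inl hw))
    · exact Or.inr (Or.inr (Or.inr hw))
  · -- quotient bound
    unfold signQ signSix signMass signKin
    rw [iG2, iG6, iG'2]
    exact sp_stretch_quot hlam1
      (sp_ii_nonneg (le_of_lt hc) f (⟨3, rfl⟩ : Even 6))
      (sp_ii_nonneg (le_of_lt hl2) g (⟨3, rfl⟩ : Even 6))
      (sp_ii_nonneg (le_of_lt hc) f even_two)
      (sp_ii_nonneg (le_of_lt hl2) g even_two)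
      (sp_set_nonneg h₁ _) (sp_set_nonneg h₂ _)
      (sp_ii_nonneg (le_of_lt hc) f' even_two)
      (sp_ii_nonneg (le_of_lt hl2) g' even_two)
      (sp_set_nonneg h₁' _) (sp_set_nonneg h₂' _)

lemma sp_zero_integral6 {L : ℝ} {F : ℝ → ℝ} (hL : 0 ≤ L) (hz : ∀ x ∈ Icc (0:ℝ) L, F x = 0) :
    (∫ x in (0:ℝ)..L, F x ^ 6) = 0 := by
  rw [show (∫ x in (0:ℝ)..L, F x ^ 6) = ∫ x in (0:ℝ)..L, (0:ℝ) from ?_]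
  · simp
  apply intervalIntegral.integral_congr
  intro x hx
  rw [uIcc_of_le hL] at hx
  simp only []
  rw [hz x hx]
  norm_num

lemma sp_degenerate {c ℓ₁ : ℝ} (hc : 0 < c) (hl1 : 0 < ℓ₁) {f f' g g' h h' : ℝ → ℝ}
    (Hf : IsH1Interval c f f') (Hg : IsH1Interval ℓ₁ g g') (Hh : IsH1Half h h')
    (e1 : f 0 = f c) (e2 : f c = g 0) (e3 : g ℓ₁ = h 0)
    (hKf : (∫ x in (0:ℝ)..c, f' x ^ 2) = 0) (hKg : (∫ x in (0:ℝ)..ℓ₁, g' x ^ 2) = 0)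
    (hk : (∫ x in Ioi (0:ℝ), h' x ^ 2) = 0) :
    (∫ x in (0:ℝ)..c, f x ^ 6) = 0 ∧ (∫ x in (0:ℝ)..ℓ₁, g x ^ 6) = 0 := by
  have hh0 : h 0 = 0 := sp_half_const Hh hk
  have hgconst := sp_interval_const hl1.le Hg hKg
  have hfconst := sp_interval_const hc.le Hf hKf
  have hg0 : g 0 = 0 := by
    have hgl := hgconst ℓ₁ ⟨hl1.le, le_rfl⟩
    rw [← hgl, e3, hh0]
  have hf0 : f 0 = 0 := by rw [e1, e2, hg0]
  constructor
  · exact sp_zero_integral6 hc.le (fun x hx => by rw [hfconst x hx, hf0])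
  · exact sp_zero_integral6 hl1.le (fun x hx => by rw [hgconst x hx, hg0])

lemma sp_choice {M₀ K₀ m1 m2 k1 k2 : ℝ} (nM : 0 ≤ M₀) (nK : 0 ≤ K₀)
    (n1 : 0 ≤ m1) (n2 : 0 ≤ m2) (nk1 : 0 ≤ k1) (nk2 : 0 ≤ k2) :
    ((M₀ + 2 * m1) ^ 2 * (K₀ + 2 * k1) ≤ (M₀ + m1 + m2) ^ 2 * (K₀ + k1 + k2)) ∨
    ((M₀ + 2 * m2) ^ 2 * (K₀ + 2 * k2) ≤ (M₀ + m1 + m2) ^ 2 * (K₀ + k1 + k2)) := by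
  by_contra hcon
  push_neg at hcon
  obtain ⟨p1, p2⟩ := hcon
  set D := (M₀ + m1 + m2) ^ 2 * (K₀ + k1 + k2) with hD
  have nD : 0 ≤ D := by rw [hD]; positivity
  have A : (M₀ + 2 * m1) * (M₀ + 2 * m2) ≤ (M₀ + m1 + m2) ^ 2 := by nlinarith [sq_nonneg (m1 - m2)]
  have B : (K₀ + 2 * k1) * (K₀ + 2 * k2) ≤ (K₀ + k1 + k2) ^ 2 := by nlinarith [sq_nonneg (k1 - k2)]
  have nA : 0 ≤ (M₀ + 2 * m1) * (M₀ + 2 * m2) := by positivity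
  have nB : 0 ≤ (K₀ + 2 * k1) * (K₀ + 2 * k2) := by positivity
  have A2 : ((M₀ + 2 * m1) * (M₀ + 2 * m2)) ^ 2 ≤ ((M₀ + m1 + m2) ^ 2) ^ 2 :=
    pow_le_pow_left₀ nA A 2
  have hprod : ((M₀ + 2 * m1) ^ 2 * (K₀ + 2 * k1)) * ((M₀ + 2 * m2) ^ 2 * (K₀ + 2 * k2)) ≤
      D ^ 2 := by
    have step : ((M₀ + 2 * m1) ^ 2 * (K₀ + 2 * k1)) * ((M₀ + 2 * m2) ^ 2 * (K₀ + 2 * k2)) =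
        ((M₀ + 2 * m1) * (M₀ + 2 * m2)) ^ 2 * ((K₀ + 2 * k1) * (K₀ + 2 * k2)) := by ring
    rw [step, hD]
    calc ((M₀ + 2 * m1) * (M₀ + 2 * m2)) ^ 2 * ((K₀ + 2 * k1) * (K₀ + 2 * k2)) ≤
        ((M₀ + m1 + m2) ^ 2) ^ 2 * ((K₀ + k1 + k2) ^ 2) :=
          mul_le_mul A2 B nB (by positivity)
      _ = ((M₀ + m1 + m2) ^ 2 * (K₀ + k1 + k2)) ^ 2 := by ring
  have hlt : D ^ 2 < ((M₀ + 2 * m1) ^ 2 * (K₀ + 2 * k1)) * ((M₀ + 2 * m2) ^ 2 * (K₀ + 2 * k2)) := by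
    nlinarith [mul_pos (sub_pos.mpr p1) (sub_pos.mpr p2)]
  linarith

set_option maxHeartbeats 2000000 in
lemma sp_extend_mem {c ℓ₁ ℓ₂ : ℝ} (hc : 0 < c) (hl1 : 0 < ℓ₁) (h12 : ℓ₁ < ℓ₂)
    {f f' g g' h₁ h₁' h₂ h₂' : ℝ → ℝ}
    (H : SignpostH1 c ℓ₁ f f' g g' h₁ h₁' h₂ h₂') (Hnz : signNonzero c ℓ₁ f g h₁ h₂) :
    ∃ G G' K K' : ℝ → ℝ, SignpostH1 c ℓ₂ f f' G G' K K' K K' ∧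
      signNonzero c ℓ₂ f G K K ∧
      signQ c ℓ₁ f f' g g' h₁ h₁' h₂ h₂' ≤ signQ c ℓ₂ f f' G G' K K' K K' := by
  obtain ⟨Hf, Hg, Hh1, Hh2, e1, e2, e3, e4⟩ := H
  have e3' : g ℓ₁ = h₂ 0 := e3.trans e4
  set Sf := ∫ x in (0:ℝ)..c, f x ^ 6 with hSf
  set Sg := ∫ x in (0:ℝ)..ℓ₁, g x ^ 6 with hSg
  set Mf := ∫ x in (0:ℝ)..c, f x ^ 2 with hMf
  set Mg := ∫ x in (0:ℝ)..ℓ₁, g x ^ 2 with hMg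
  set m1 := ∫ x in Ioi (0:ℝ), h₁ x ^ 2 with hm1
  set m2 := ∫ x in Ioi (0:ℝ), h₂ x ^ 2 with hm2
  set Kf := ∫ x in (0:ℝ)..c, f' x ^ 2 with hKf
  set Kg := ∫ x in (0:ℝ)..ℓ₁, g' x ^ 2 with hKg
  set k1 := ∫ x in Ioi (0:ℝ), h₁' x ^ 2 with hk1
  set k2 := ∫ x in Ioi (0:ℝ), h₂' x ^ 2 with hk2
  have nSf : 0 ≤ Sf := sp_ii_nonneg hc.le f (⟨3, rfl⟩ : Even 6)
  have nSg : 0 ≤ Sg := sp_ii_nonneg hl1.le g (⟨3, rfl⟩ : Even 6)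
  have nMf : 0 ≤ Mf := sp_ii_nonneg hc.le f even_two
  have nMg : 0 ≤ Mg := sp_ii_nonneg hl1.le g even_two
  have nm1 : 0 ≤ m1 := sp_set_nonneg h₁ _
  have nm2 : 0 ≤ m2 := sp_set_nonneg h₂ _
  have nKf : 0 ≤ Kf := sp_ii_nonneg hc.le f' even_two
  have nKg : 0 ≤ Kg := sp_ii_nonneg hl1.le g' even_two
  have nk1 : 0 ≤ k1 := sp_set_nonneg h₁' _
  have nk2 : 0 ≤ k2 := sp_set_nonneg h₂' _
  have hQdef : signQ c ℓ₁ f f' g g' h₁ h₁' h₂ h₂' =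
      (Sf + Sg) / ((Mf + Mg + m1 + m2) ^ 2 * (Kf + Kg + k1 + k2)) := rfl
  by_cases hQpos : 0 < signQ c ℓ₁ f f' g g' h₁ h₁' h₂ h₂'
  swap
  · -- non-positive quotient: any extension works
    push_neg at hQpos
    rcases Hnz with hw | hw | hw | hw
    · obtain ⟨G, G', K, K', mem, nz, _⟩ := sp_extend hc hl1 h12 Hf Hg Hh1 e1 e2 e3
      exact ⟨G, G', K, K', mem, nz (Or.inl hw),
        le_trans hQpos (signQ_nonneg hc.le (by linarith) f f' G G' K K' K K')⟩
    · obtain ⟨G, G', K, K', mem, nz, _⟩ := sp_extend hc hl1 h12 Hf Hg Hh1 e1 e2 e3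
      exact ⟨G, G', K, K', mem, nz (Or.inr (Or.inl hw)),
        le_trans hQpos (signQ_nonneg hc.le (by linarith) f f' G G' K K' K K')⟩
    · obtain ⟨G, G', K, K', mem, nz, _⟩ := sp_extend hc hl1 h12 Hf Hg Hh1 e1 e2 e3
      exact ⟨G, G', K, K', mem, nz (Or.inr (Or.inr hw)),
        le_trans hQpos (signQ_nonneg hc.le (by linarith) f f' G G' K K' K K')⟩
    · obtain ⟨G, G', K, K', mem, nz, _⟩ := sp_extend hc hl1 h12 Hf Hg Hh2 e1 e2 e3'
      exact ⟨G, G', K, K', mem, nz (Or.inr (Or.inr hw)),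
        le_trans hQpos (signQ_nonneg hc.le (by linarith) f f' G G' K K' K K')⟩
  · -- positive quotient
    rw [hQdef] at hQpos
    set D := (Mf + Mg + m1 + m2) ^ 2 * (Kf + Kg + k1 + k2) with hD
    have hDpos : 0 < D := by
      rcases div_pos_iff.mp hQpos with ⟨_, hp⟩ | ⟨_, hp⟩
      · exact hp
      · exfalso
        have : 0 ≤ D := by rw [hD]; positivity
        linarith
    have hNpos : 0 < Sf + Sg := by
      rcases div_pos_iff.mp hQpos with ⟨hp, _⟩ | ⟨_, hp⟩
      · exact hp
      · exfalso
        have : 0 ≤ D := by rw [hD]; positivity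
        linarith
    have hM₀pos : 0 < Mf + Mg := by
      rcases lt_or_eq_of_le (add_nonneg nMf nMg) with hp | hp
      · exact hp
      · exfalso
        have hMf0 : Mf = 0 := by linarith
        have hMg0 : Mg = 0 := by linarith
        have := sp_mass_zero_six_zero hc.le Hf hMf0
        have := sp_mass_zero_six_zero hl1.le Hg hMg0
        rw [hSf, hSg] at hNpos
        linarith
    -- a nonzero witness on the core
    have hwit : (∃ x ∈ Icc (0:ℝ) c, f x ≠ 0) ∨ (∃ x ∈ Icc (0:ℝ) ℓ₁, g x ≠ 0) := by
      rcases lt_or_eq_of_le nSf with hp | hp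
      · exact Or.inl (sp_six_pos_witness hc.le (ne_of_gt hp))
      · have : 0 < Sg := by linarith
        exact Or.inr (sp_six_pos_witness hl1.le (ne_of_gt this))
    -- choose the better half-line
    rcases sp_choice (add_nonneg nMf nMg) (add_nonneg nKf nKg) nm1 nm2 nk1 nk2 with hch | hch
    · -- use h₁
      have hKipos : 0 < Kf + Kg + 2 * k1 := by
        rcases lt_or_eq_of_le (by positivity : (0:ℝ) ≤ Kf + Kg + 2 * k1) with hp | hp
        · exact hp
        · exfalso
          obtain ⟨z1, z2⟩ := sp_degenerate hc hl1 Hf Hg Hh1 e1 e2 e3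
            (by linarith) (by linarith) (by linarith)
          rw [← hSf] at z1; rw [← hSg] at z2
          linarith
      obtain ⟨G, G', K, K', mem, nz, hsix, hmassUB, hmassLB, hkinUB, hkinLB⟩ :=
        sp_extend hc hl1 h12 Hf Hg Hh1 e1 e2 e3
      refine ⟨G, G', K, K', mem, ?_, ?_⟩
      · rcases hwit with hw | hw
        · exact nz (Or.inl hw)
        · exact nz (Or.inr (Or.inl hw))
      rw [hQdef]
      have hmass_pos : 0 < signMass c ℓ₂ f G K K := lt_of_lt_of_le hM₀pos hmassLB
      have hkin_pos : 0 < signKin c ℓ₂ f' G' K' K' := by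
        have : Kf + Kg + k1 ≤ signKin c ℓ₂ f' G' K' K' := hkinLB
        linarith
      have hdle : signMass c ℓ₂ f G K K ^ 2 * signKin c ℓ₂ f' G' K' K' ≤ D := by
        calc signMass c ℓ₂ f G K K ^ 2 * signKin c ℓ₂ f' G' K' K' ≤
            ((Mf + Mg) + 2 * m1) ^ 2 * ((Kf + Kg) + 2 * k1) := by
              apply mul_le_mul (pow_le_pow_left₀ hmass_pos.le (by linarith) 2)
                (by linarith) hkin_pos.le (by positivity)
          _ ≤ D := by rw [hD]; convert hch using 2 <;> ring
      have hnle : Sf + Sg ≤ signSix c ℓ₂ f G := by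
        have : signSix c ℓ₁ f g = Sf + Sg := rfl
        linarith [hsix]
      unfold signQ
      exact div_le_div₀ (le_trans hNpos.le hnle) hnle (by positivity) hdle
    · -- use h₂
      have hKipos : 0 < Kf + Kg + 2 * k2 := by
        rcases lt_or_eq_of_le (by positivity : (0:ℝ) ≤ Kf + Kg + 2 * k2) with hp | hp
        · exact hp
        · exfalso
          obtain ⟨z1, z2⟩ := sp_degenerate hc hl1 Hf Hg Hh2 e1 e2 e3'
            (by linarith) (by linarith) (by linarith)
          rw [← hSf] at z1; rw [← hSg] at z2
          linarith
      obtain ⟨G, G', K, K', mem, nz, hsix, hmassUB, hmassLB, hkinUB, hkinLB⟩ :=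
        sp_extend hc hl1 h12 Hf Hg Hh2 e1 e2 e3'
      refine ⟨G, G', K, K', mem, ?_, ?_⟩
      · rcases hwit with hw | hw
        · exact nz (Or.inl hw)
        · exact nz (Or.inr (Or.inl hw))
      rw [hQdef]
      have hmass_pos : 0 < signMass c ℓ₂ f G K K := lt_of_lt_of_le hM₀pos hmassLB
      have hkin_pos : 0 < signKin c ℓ₂ f' G' K' K' := by
        have : Kf + Kg + k2 ≤ signKin c ℓ₂ f' G' K' K' := hkinLB
        linarith
      have hdle : signMass c ℓ₂ f G K K ^ 2 * signKin c ℓ₂ f' G' K' K' ≤ D := by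
        calc signMass c ℓ₂ f G K K ^ 2 * signKin c ℓ₂ f' G' K' K' ≤
            ((Mf + Mg) + 2 * m2) ^ 2 * ((Kf + Kg) + 2 * k2) := by
              apply mul_le_mul (pow_le_pow_left₀ hmass_pos.le (by linarith) 2)
                (by linarith) hkin_pos.le (by positivity)
          _ ≤ D := by rw [hD]; convert hch using 2 <;> ring
      have hnle : Sf + Sg ≤ signSix c ℓ₂ f G := by
        have : signSix c ℓ₁ f g = Sf + Sg := rfl
        linarith [hsix]
      unfold signQ
      exact div_le_div₀ (le_trans hNpos.le hnle) hnle (by positivity) hdle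

/-- Monotonicity of the sharp reduced Gagliardo–Nirenberg constant of the
signpost graph with respect to the bridge length: if `0 < ℓ₁ ≤ ℓ₂` then
`C_{K_{ℓ₁}} ≤ C_{K_{ℓ₂}}`. -/
theorem signpost_CK_monotone (c : ℝ) (hc : 0 < c) (ℓ₁ ℓ₂ : ℝ)
    (h₁ : 0 < ℓ₁) (h₂ : ℓ₁ ≤ ℓ₂) :
    signCK c ℓ₁ ≤ signCK c ℓ₂ := by
  rcases eq_or_lt_of_le h₂ with rfl | hlt
  · exact le_rfl
  have hl2 : 0 < ℓ₂ := lt_trans h₁ hlt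
  set S₁ := {q : ℝ | ∃ f f' g g' k₁ k₁' k₂ k₂' : ℝ → ℝ,
    SignpostH1 c ℓ₁ f f' g g' k₁ k₁' k₂ k₂' ∧ signNonzero c ℓ₁ f g k₁ k₂ ∧
    q = signQ c ℓ₁ f f' g g' k₁ k₁' k₂ k₂'} with hS₁
  set S₂ := {q : ℝ | ∃ f f' g g' k₁ k₁' k₂ k₂' : ℝ → ℝ,
    SignpostH1 c ℓ₂ f f' g g' k₁ k₁' k₂ k₂' ∧ signNonzero c ℓ₂ f g k₁ k₂ ∧
    q = signQ c ℓ₂ f f' g g' k₁ k₁' k₂ k₂'} with hS₂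
  have hCK1 : signCK c ℓ₁ = sSup S₁ := rfl
  have hCK2 : signCK c ℓ₂ = sSup S₂ := rfl
  rw [hCK1, hCK2]
  have nn : ∀ q ∈ S₂, 0 ≤ q := by
    rintro q ⟨f, f', g, g', k₁, k₁', k₂, k₂', _, _, rfl⟩
    exact signQ_nonneg hc.le hl2.le f f' g g' k₁ k₁' k₂ k₂'
  have key1 : ∀ q ∈ S₁, ∃ q' ∈ S₂, q ≤ q' := by
    rintro q ⟨f, f', g, g', k₁, k₁', k₂, k₂', mem, nz, rfl⟩
    obtain ⟨G, G', K, K', mem', nz', hle⟩ := sp_extend_mem hc h₁ hlt mem nz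
    exact ⟨signQ c ℓ₂ f f' G G' K K' K K',
      ⟨f, f', G, G', K, K', K, K', mem', nz', rfl⟩, hle⟩
  have key2 : ∀ q ∈ S₂, ∃ q' ∈ S₁, q ≤ (ℓ₂ / ℓ₁) ^ 2 * q' := by
    rintro q ⟨f, f', g, g', k₁, k₁', k₂, k₂', mem, nz, rfl⟩
    obtain ⟨G, G', mem', nz', hle⟩ := sp_stretch hc h₁ h₂ mem nz
    exact ⟨signQ c ℓ₁ f f' G G' k₁ k₁' k₂ k₂',
      ⟨f, f', G, G', k₁, k₁', k₂, k₂', mem', nz', rfl⟩, hle⟩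
  by_cases hb : BddAbove S₂
  · apply Real.sSup_le
    · intro q hq
      obtain ⟨q', hq', hle⟩ := key1 q hq
      exact hle.trans (le_csSup hb hq')
    · exact Real.sSup_nonneg nn
  · have hb1 : ¬ BddAbove S₁ := by
      rintro ⟨M, hM⟩
      apply hb
      refine ⟨(ℓ₂ / ℓ₁) ^ 2 * max M 0, ?_⟩
      intro q hq
      obtain ⟨q', hq', hle⟩ := key2 q hq
      have hq'M : q' ≤ max M 0 := le_trans (hM hq') (le_max_left _ _)
      calc q ≤ (ℓ₂ / ℓ₁) ^ 2 * q' := hle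
        _ ≤ (ℓ₂ / ℓ₁) ^ 2 * max M 0 := mul_le_mul_of_nonneg_left hq'M (sq_nonneg _)
    rw [Real.sSup_of_not_bddAbove hb, Real.sSup_of_not_bddAbove hb1]
end
end
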